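/- arXiv:2603.18517 — 2 statements merged into one kernel-verified Lean document; each statement's English description precedes it below -/
import Mathlib

section
/- Let k ≥ 2 and n ≥ 2k be integers, and let 𝒢 = {G₁, …, G_{kn}} be a family of balanced bipartite graphs on vertex set [2n] with common bipartition (X, Y). If every Gᵢ is isomorphic to B_{n,k} and there exist t₁, t₂ with G_{t₁} ≠ G_{t₂}, then 𝒢 admits a rainbow k-factor. -/
open SimpleGraph

/-- Spectral radius: supremum of the (real) eigenvalues of the adjacency matrix. -/
noncomputable def specRad {V : Type*} [Fintype V] [DecidableEq V] (G : SimpleGraph V) : ℝ :=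
  sSup {x : ℝ | Module.End.HasEigenvalue
    (Matrix.toLin' (@SimpleGraph.adjMatrix ℝ V G (Classical.decRel _) _ _)) x}

/-- The map on edges used by the `(x,y)`-shift: replace `y` by `x`. -/
def shiftMap {V : Type*} [DecidableEq V] (x y : V) (e : Sym2 V) : Sym2 V :=
  Sym2.map (fun v => if v = y then x else v) e

open scoped Classical in
/-- The `(x,y)`-shift of a graph. -/
noncomputable def shiftGraph {V : Type*} [DecidableEq V] (G : SimpleGraph V) (x y : V) :
    SimpleGraph V :=
  SimpleGraph.fromEdgeSet
    ((fun e => if y ∈ e ∧ x ∉ e ∧ shiftMap x y e ∉ G.edgeSet then shiftMap x y e else e) ''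
      G.edgeSet)

/-- Balanced bipartite graph on `[2n]` with parts `X = {0,…,n-1}`, `Y = {n,…,2n-1}`:
`x ∈ X` is adjacent to `y ∈ Y` iff `x < a` or `y < 2n - b`.
`bipG n (k-1) 1 = K_{k-1,n-1} ⊔ quasi-complement of K_{n-k+1,1}`. -/
def bipG (n a b : ℕ) : SimpleGraph (Fin (2*n)) where
  Adj u v := (u.val < n ∧ n ≤ v.val ∧ (u.val < a ∨ v.val < 2*n - b)) ∨
             (v.val < n ∧ n ≤ u.val ∧ (v.val < a ∨ u.val < 2*n - b))
  symm := ⟨by intro u v h; tauto⟩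
  loopless := ⟨by intro u h; rcases h with ⟨h1, h2, -⟩ | ⟨h1, h2, -⟩ <;> omega⟩

/-- `H` is a rainbow `k`-factor of the family `F`. -/
def IsRainbowFactor {V : Type*} {m : ℕ} (F : Fin m → SimpleGraph V) (k : ℕ)
    (H : SimpleGraph V) : Prop :=
  (∀ v, (H.neighborSet v).ncard = k) ∧
  ∃ φ : H.edgeSet ≃ Fin m, ∀ e : H.edgeSet, (e : Sym2 V) ∈ (F (φ e)).edgeSet

section MyHelpers
open Finset
-- interval count on Fin m
lemma card_filter_interval (m a b : ℕ) (hb : b ≤ m) :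
    (Finset.univ.filter (fun v : Fin m => a ≤ v.val ∧ v.val < b)).card = b - a := by
  rw [← Nat.card_Ico]
  apply Finset.card_bij (fun v _ => v.val)
  · intro v hv; simp at hv ⊢; omega
  · intro v _ v' _ h; exact Fin.val_injective h
  · intro j hj; simp at hj; exact ⟨⟨j, by omega⟩, by simp; omega, rfl⟩

lemma card_filter_equiv {m : ℕ} (f : Fin m ≃ Fin m) (p : Fin m → Prop) [DecidablePred p] :
    (Finset.univ.filter (fun z => p (f z))).card = (Finset.univ.filter p).card := by
  apply Finset.card_bij (fun z _ => f z)
  · intro z hz; simp at hz ⊢; exact hz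
  · intro z _ z' _ h; exact f.injective h
  · intro y hy; simp at hy; exact ⟨f.symm y, by simpa using hy, by simp⟩

-- permutation mapping one finset onto another of equal card
lemma exists_perm_maps {m : ℕ} (A S : Finset (Fin m)) (h : A.card = S.card) :
    ∃ π : Equiv.Perm (Fin m), ∀ z, z ∈ A ↔ π z ∈ S := by
  classical
  have h' : Aᶜ.card = Sᶜ.card := by
    rw [Finset.card_compl, Finset.card_compl, h]
  let e1 : (A : Finset (Fin m)) ≃ (S : Finset (Fin m)) := Finset.equivOfCardEq h
  let e2 : (Aᶜ : Finset (Fin m)) ≃ (Sᶜ : Finset (Fin m)) := Finset.equivOfCardEq h'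
  let e2' : {x // ¬ x ∈ A} ≃ {x // ¬ x ∈ S} :=
    (Equiv.subtypeEquivRight (fun x => by simp)).trans
      (e2.trans (Equiv.subtypeEquivRight (fun x => by simp)))
  refine ⟨Equiv.subtypeCongr e1 e2', fun z => ?_⟩
  by_cases hz : z ∈ A
  · rw [Equiv.subtypeCongr, Equiv.trans_apply, Equiv.trans_apply,
      Equiv.sumCompl_symm_apply_of_pos hz]
    simp only [Equiv.sumCongr_apply, Sum.map_inl, Equiv.sumCompl_apply_inl]
    exact ⟨fun _ => (e1 ⟨z, hz⟩).2, fun _ => hz⟩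
  · rw [Equiv.subtypeCongr, Equiv.trans_apply, Equiv.trans_apply,
      Equiv.sumCompl_symm_apply_of_neg hz]
    have h2 := (e2' ⟨z, hz⟩).2
    simp only [Equiv.sumCongr_apply, Sum.map_inr, Equiv.sumCompl_apply_inr]
    exact ⟨fun h => absurd h hz, fun h => absurd h h2⟩

section Hgraph

variable (n k : ℕ)

def dn (hn : 0 < n) (v : Fin (2*n)) : Fin n := ⟨v.val % n, Nat.mod_lt _ hn⟩

lemma dn_val_low (hn : 0 < n) (v : Fin (2*n)) (h : v.val < n) : (dn n hn v).val = v.val :=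
  Nat.mod_eq_of_lt h

lemma dn_val_high (hn : 0 < n) (v : Fin (2*n)) (h : n ≤ v.val) : (dn n hn v).val = v.val - n := by
  have h2 := v.isLt
  show v.val % n = v.val - n
  rw [Nat.mod_eq_sub_mod h, Nat.mod_eq_of_lt (by omega)]

def Hg (hn : 0 < n) (τ σ : Equiv.Perm (Fin n)) : SimpleGraph (Fin (2*n)) where
  Adj u v := (u.val < n ∧ n ≤ v.val ∧ (σ (dn n hn v) - τ (dn n hn u)).val < k) ∨
             (v.val < n ∧ n ≤ u.val ∧ (σ (dn n hn u) - τ (dn n hn v)).val < k)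
  symm := ⟨fun u v h => by tauto⟩
  loopless := ⟨fun u h => by rcases h with ⟨h1,h2,_⟩|⟨h1,h2,_⟩ <;> omega⟩

variable (hn : 0 < n) (τ σ : Equiv.Perm (Fin n))

lemma Hg_cross {u v : Fin (2*n)} (h : (Hg n k hn τ σ).Adj u v) :
    (u.val < n ∧ n ≤ v.val) ∨ (v.val < n ∧ n ≤ u.val) := by
  rcases h with ⟨h1,h2,_⟩|⟨h1,h2,_⟩ <;> tauto

lemma Hg_adj_low {x v : Fin (2*n)} (hx : x.val < n) :
    (Hg n k hn τ σ).Adj x v ↔ n ≤ v.val ∧ (σ (dn n hn v) - τ (dn n hn x)).val < k := by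
  constructor
  · rintro (⟨h1,h2,h3⟩|⟨h1,h2,h3⟩)
    · exact ⟨h2, h3⟩
    · omega
  · intro ⟨h1, h2⟩; exact Or.inl ⟨hx, h1, h2⟩

lemma Hg_adj_high {y u : Fin (2*n)} (hy : n ≤ y.val) :
    (Hg n k hn τ σ).Adj y u ↔ u.val < n ∧ (σ (dn n hn y) - τ (dn n hn u)).val < k := by
  constructor
  · rintro (⟨h1,h2,h3⟩|⟨h1,h2,h3⟩)
    · omega
    · exact ⟨h1, h3⟩
  · intro ⟨h1, h2⟩; exact Or.inr ⟨h1, hy, h2⟩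

lemma card_filter_high (q : Fin n → Prop) [DecidablePred q] :
    (univ.filter (fun v : Fin (2*n) => n ≤ v.val ∧ q (dn n hn v))).card
      = (univ.filter q).card := by
  apply Finset.card_bij (fun v _ => dn n hn v)
  · intro v hv; simp at hv ⊢; exact hv.2
  · intro v hv v' hv' h
    simp at hv hv'
    have e1 := dn_val_high n hn v hv.1
    have e2 := dn_val_high n hn v' hv'.1
    have := congrArg Fin.val h
    have h1 := v.isLt; have h2 := v'.isLt
    exact Fin.val_injective (by omega)
  · intro z hz
    simp at hz
    refine ⟨⟨n + z.val, by omega⟩, ?_, ?_⟩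
    · have : (dn n hn ⟨n + z.val, by omega⟩) = z := by
        apply Fin.val_injective
        rw [dn_val_high n hn _ (by simp)]
        simp
      simp [this, hz]
    · apply Fin.val_injective
      rw [dn_val_high n hn _ (by simp)]
      simp

lemma card_filter_low (q : Fin n → Prop) [DecidablePred q] :
    (univ.filter (fun v : Fin (2*n) => v.val < n ∧ q (dn n hn v))).card
      = (univ.filter q).card := by
  apply Finset.card_bij (fun v _ => dn n hn v)
  · intro v hv; simp at hv ⊢; exact hv.2
  · intro v hv v' hv' h
    simp at hv hv'
    have e1 := dn_val_low n hn v hv.1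
    have e2 := dn_val_low n hn v' hv'.1
    have := congrArg Fin.val h
    exact Fin.val_injective (by omega)
  · intro z hz
    simp at hz
    refine ⟨⟨z.val, by omega⟩, ?_, ?_⟩
    · have : (dn n hn ⟨z.val, by omega⟩) = z := by
        apply Fin.val_injective
        rw [dn_val_low n hn _ (by exact z.isLt)]
      simp [this, hz]
    · apply Fin.val_injective
      rw [dn_val_low n hn _ (by exact z.isLt)]

end Hgraph

section Hgraph2
variable (n k : ℕ) (hn : 0 < n) (τ σ : Equiv.Perm (Fin n))

lemma card_filter_val_lt (m b : ℕ) (hb : b ≤ m) :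
    (univ.filter (fun v : Fin m => v.val < b)).card = b := by
  have := card_filter_interval m 0 b hb
  simp only [Nat.zero_le, true_and, Nat.sub_zero] at this
  exact this

include hn in
lemma card_sub_right_lt (a : Fin n) (f : Equiv.Perm (Fin n)) (hk : k ≤ n) :
    (univ.filter (fun z : Fin n => (f z - a).val < k)).card = k := by
  haveI : NeZero n := ⟨hn.ne'⟩
  have h := card_filter_equiv (f.trans (Equiv.subRight a))
      (fun y : Fin n => y.val < k)
  simp only [Equiv.trans_apply, Equiv.subRight_apply] at h
  rw [h, card_filter_val_lt n k hk]

include hn in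
lemma card_sub_left_lt (c : Fin n) (f : Equiv.Perm (Fin n)) (hk : k ≤ n) :
    (univ.filter (fun z : Fin n => (c - f z).val < k)).card = k := by
  haveI : NeZero n := ⟨hn.ne'⟩
  have h := card_filter_equiv (f.trans (Equiv.subLeft c))
      (fun y : Fin n => y.val < k)
  simp only [Equiv.trans_apply, Equiv.subLeft_apply] at h
  rw [h, card_filter_val_lt n k hk]

instance Hg_decAdj : DecidableRel (Hg n k hn τ σ).Adj := fun u v =>
  inferInstanceAs (Decidable ((u.val < n ∧ n ≤ v.val ∧ (σ (dn n hn v) - τ (dn n hn u)).val < k) ∨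
             (v.val < n ∧ n ≤ u.val ∧ (σ (dn n hn u) - τ (dn n hn v)).val < k)))

lemma Hg_nbhd_low {x : Fin (2*n)} (hx : x.val < n) :
    (Hg n k hn τ σ).neighborFinset x
      = univ.filter (fun v : Fin (2*n) => n ≤ v.val ∧ (σ (dn n hn v) - τ (dn n hn x)).val < k) := by
  ext v
  simp [mem_neighborFinset, Hg_adj_low n k hn τ σ hx]

lemma Hg_nbhd_high {y : Fin (2*n)} (hy : n ≤ y.val) :
    (Hg n k hn τ σ).neighborFinset y
      = univ.filter (fun u : Fin (2*n) => u.val < n ∧ (σ (dn n hn y) - τ (dn n hn u)).val < k) := by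
  ext v
  simp [mem_neighborFinset, Hg_adj_high n k hn τ σ hy]

lemma Hg_degree (hk : k ≤ n) (v : Fin (2*n)) : (Hg n k hn τ σ).degree v = k := by
  rw [← card_neighborFinset_eq_degree]
  by_cases hv : v.val < n
  · rw [Hg_nbhd_low n k hn τ σ hv,
      card_filter_high n hn (fun z => (σ z - τ (dn n hn v)).val < k),
      card_sub_right_lt n k hn _ σ hk]
  · rw [Hg_nbhd_high n k hn τ σ (by omega),
      card_filter_low n hn (fun z => (σ (dn n hn v) - τ z).val < k),
      card_sub_left_lt n k hn _ τ hk]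

end Hgraph2

section Hgraph3
variable (n k : ℕ) (hn : 0 < n)

lemma dn_inj_high {a b : Fin (2*n)} (ha : n ≤ a.val) (hb : n ≤ b.val)
    (h : dn n hn a = dn n hn b) : a = b := by
  have e1 := dn_val_high n hn a ha
  have e2 := dn_val_high n hn b hb
  have := congrArg Fin.val h
  have h1 := a.isLt; have h2 := b.isLt
  exact Fin.val_injective (by omega)

lemma dn_inj_low {a b : Fin (2*n)} (ha : a.val < n) (hb : b.val < n)
    (h : dn n hn a = dn n hn b) : a = b := by
  have e1 := dn_val_low n hn a ha
  have e2 := dn_val_low n hn b hb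
  have := congrArg Fin.val h
  exact Fin.val_injective (by omega)

lemma exists_Hg_nbhd (hkn : k ≤ n) (v₀ : Fin (2*n)) (T₀ : Finset (Fin (2*n)))
    (hcard : T₀.card = k)
    (hopp : ∀ t ∈ T₀, (v₀.val < n ∧ n ≤ t.val) ∨ (t.val < n ∧ n ≤ v₀.val)) :
    ∃ τ σ : Equiv.Perm (Fin n), (Hg n k hn τ σ).neighborFinset v₀ = T₀ := by
  classical
  by_cases hv : v₀.val < n
  · have hTh : ∀ t ∈ T₀, n ≤ t.val := by
      intro t ht; rcases hopp t ht with ⟨-, h⟩ | ⟨-, h⟩ <;> omega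
    set D := T₀.image (dn n hn) with hD
    have hDcard : D.card = k := by
      rw [hD, Finset.card_image_of_injOn, hcard]
      intro a ha b hb hab
      exact dn_inj_high n hn (hTh a ha) (hTh b hb) hab
    set S := univ.filter (fun z : Fin n => (z - dn n hn v₀).val < k) with hS
    have hScard : S.card = k := by
      have := card_sub_right_lt n k hn (dn n hn v₀) (Equiv.refl _) hkn
      rw [hS]; convert this; rfl
    obtain ⟨σ, hσ⟩ := exists_perm_maps D S (by rw [hDcard, hScard])
    refine ⟨1, σ, ?_⟩
    rw [Hg_nbhd_low n k hn 1 σ hv]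
    ext v
    simp only [mem_filter, mem_univ, true_and]
    constructor
    · rintro ⟨hnv, hlt⟩
      have : σ (dn n hn v) ∈ S := by
        simp only [hS, mem_filter, mem_univ, true_and]
        simpa using hlt
      have hvD : dn n hn v ∈ D := (hσ _).mpr this
      rw [hD] at hvD
      obtain ⟨t, ht, hdt⟩ := Finset.mem_image.mp hvD
      rwa [dn_inj_high n hn (hTh t ht) hnv hdt] at ht
    · intro hvT
      refine ⟨hTh v hvT, ?_⟩
      have hvD : dn n hn v ∈ D := Finset.mem_image_of_mem _ hvT
      have := (hσ _).mp hvD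
      simp only [hS, mem_filter, mem_univ, true_and] at this
      simpa using this
  · have hTl : ∀ t ∈ T₀, t.val < n := by
      intro t ht; rcases hopp t ht with ⟨h, -⟩ | ⟨h, -⟩ <;> omega
    set D := T₀.image (dn n hn) with hD
    have hDcard : D.card = k := by
      rw [hD, Finset.card_image_of_injOn, hcard]
      intro a ha b hb hab
      exact dn_inj_low n hn (hTl a ha) (hTl b hb) hab
    set S := univ.filter (fun z : Fin n => (dn n hn v₀ - z).val < k) with hS
    have hScard : S.card = k := by
      have := card_sub_left_lt n k hn (dn n hn v₀) (Equiv.refl _) hkn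
      rw [hS]; convert this; rfl
    obtain ⟨τ, hτ⟩ := exists_perm_maps D S (by rw [hDcard, hScard])
    refine ⟨τ, 1, ?_⟩
    rw [Hg_nbhd_high n k hn τ 1 (by omega)]
    ext v
    simp only [mem_filter, mem_univ, true_and]
    constructor
    · rintro ⟨hnv, hlt⟩
      have : τ (dn n hn v) ∈ S := by
        simp only [hS, mem_filter, mem_univ, true_and]
        simpa using hlt
      have hvD : dn n hn v ∈ D := (hτ _).mpr this
      rw [hD] at hvD
      obtain ⟨t, ht, hdt⟩ := Finset.mem_image.mp hvD
      rwa [dn_inj_low n hn (hTl t ht) hnv hdt] at ht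
    · intro hvT
      refine ⟨hTl v hvT, ?_⟩
      have hvD : dn n hn v ∈ D := Finset.mem_image_of_mem _ hvT
      have := (hτ _).mp hvD
      simp only [hS, mem_filter, mem_univ, true_and] at this
      simpa using this

lemma exists_Hg_avoid' (hkn : k < n) (x y : Fin (2*n)) (hx : x.val < n) (hy : n ≤ y.val) :
    ∃ τ σ : Equiv.Perm (Fin n), ¬ (Hg n k hn τ σ).Adj x y := by
  haveI : NeZero n := ⟨hn.ne'⟩
  refine ⟨1, Equiv.addRight (dn n hn x - dn n hn y + ⟨k, hkn⟩), ?_⟩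
  rw [Hg_adj_low n k hn _ _ hx]
  rintro ⟨-, hlt⟩
  have hc : (Equiv.addRight (dn n hn x - dn n hn y + ⟨k, hkn⟩)) (dn n hn y)
      - (1 : Equiv.Perm (Fin n)) (dn n hn x) = (⟨k, hkn⟩ : Fin n) := by
    simp only [Equiv.coe_addRight, Equiv.Perm.coe_one, id_eq]
    abel
  rw [hc] at hlt
  simp at hlt

lemma exists_Hg_avoid (hkn : k < n) (x y : Fin (2*n)) :
    ∃ τ σ : Equiv.Perm (Fin n), ¬ (Hg n k hn τ σ).Adj x y := by
  by_cases hx : x.val < n ∧ n ≤ y.val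
  · exact exists_Hg_avoid' n k hn hkn x y hx.1 hx.2
  · by_cases hy : y.val < n ∧ n ≤ x.val
    · obtain ⟨τ, σ, h⟩ := exists_Hg_avoid' n k hn hkn y x hy.1 hy.2
      exact ⟨τ, σ, fun hadj => h hadj.symm⟩
    · refine ⟨1, 1, fun hadj => ?_⟩
      rcases Hg_cross n k hn 1 1 hadj with h | h <;> tauto

end Hgraph3

section SL

def KG (n : ℕ) : SimpleGraph (Fin (2*n)) where
  Adj u v := (u.val < n ∧ n ≤ v.val) ∨ (v.val < n ∧ n ≤ u.val)
  symm := ⟨by intro u v h; tauto⟩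
  loopless := ⟨by intro u h; omega⟩

lemma structure_lemma (n k : ℕ) (hk : 2 ≤ k) (hn : 2*k ≤ n) (G : SimpleGraph (Fin (2*n)))
    (hbip : ∀ u v, G.Adj u v → (u.val < n ∧ n ≤ v.val) ∨ (v.val < n ∧ n ≤ u.val))
    (hiso : Nonempty (G ≃g bipG n (k-1) 1)) :
    ∃ w : Fin (2*n), (G.neighborSet w).ncard = k - 1 ∧
      ∀ u v : Fin (2*n), ((u.val < n ∧ n ≤ v.val) ∨ (v.val < n ∧ n ≤ u.val)) →
        u ≠ w → v ≠ w → G.Adj u v := by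
  classical
  obtain ⟨f⟩ := hiso
  have hn4 : 4 ≤ n := by omega
  set last : Fin (2*n) := ⟨2*n-1, by omega⟩ with hlast
  have hlv : last.val = 2*n-1 := rfl
  set w : Fin (2*n) := f.symm last with hw
  -- neighbor set of `last` in bipG
  have hnbB : (bipG n (k-1) 1).neighborSet last = {u : Fin (2*n) | u.val < k-1} := by
    ext u
    simp only [mem_neighborSet, Set.mem_setOf_eq, bipG]
    constructor
    · rintro (⟨h1,h2,h3⟩|⟨h1,h2,h3⟩) <;> omega
    · intro h
      right
      refine ⟨by omega, by omega, by omega⟩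
  have hnbBcard : ((bipG n (k-1) 1).neighborSet last).ncard = k - 1 := by
    rw [hnbB]
    have : {u : Fin (2*n) | u.val < k-1} = ↑(univ.filter (fun u : Fin (2*n) => u.val < k-1)) := by
      ext u; simp
    rw [this, Set.ncard_coe_finset, card_filter_val_lt _ _ (by omega)]
  -- degree of w in G
  have hdegw : (G.neighborSet w).ncard = k - 1 := by
    have hfw : f w = last := by rw [hw]; exact f.apply_symm_apply last
    have e : (G.neighborSet w).ncard = ((bipG n (k-1) 1).neighborSet (f w)).ncard := by
      rw [← Nat.card_coe_set_eq, ← Nat.card_coe_set_eq]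
      exact Nat.card_congr (f.mapNeighborSet w)
    rw [e, hfw, hnbBcard]
  -- edge counts
  have hGle : G ≤ KG n := fun u v h => hbip u v h
  have hBle : bipG n (k-1) 1 ≤ KG n := by
    intro u v h
    rcases h with ⟨h1,h2,-⟩|⟨h1,h2,-⟩
    · exact Or.inl ⟨h1,h2⟩
    · exact Or.inr ⟨h1,h2⟩
  have hedgecard : G.edgeSet.ncard = (bipG n (k-1) 1).edgeSet.ncard := by
    rw [← Nat.card_coe_set_eq, ← Nat.card_coe_set_eq]
    exact Nat.card_congr f.mapEdgeSet
  have hmissG : ((KG n).edgeSet \ G.edgeSet).ncard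
      = ((KG n).edgeSet \ (bipG n (k-1) 1).edgeSet).ncard := by
    rw [Set.ncard_diff (edgeSet_mono hGle) (Set.toFinite _),
      Set.ncard_diff (edgeSet_mono hBle) (Set.toFinite _), hedgecard]
  -- missing edges of bipG
  have hmissB : (KG n).edgeSet \ (bipG n (k-1) 1).edgeSet
      = (fun x => s(x, last)) '' {x : Fin (2*n) | k-1 ≤ x.val ∧ x.val < n} := by
    ext e
    induction e with
    | _ u v =>
      simp only [Set.mem_diff, mem_edgeSet, Set.mem_image, Set.mem_setOf_eq]
      constructor
      · rintro ⟨hK, hnB⟩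
        simp only [bipG] at hnB
        push_neg at hnB
        rcases hK with ⟨h1, h2⟩ | ⟨h1, h2⟩
        · refine ⟨u, ⟨by omega, h1⟩, ?_⟩
          have : v = last := by apply Fin.val_injective; omega
          rw [this]
        · refine ⟨v, ⟨by omega, h1⟩, ?_⟩
          have : u = last := by apply Fin.val_injective; omega
          rw [this, Sym2.eq_swap]
      · rintro ⟨x, ⟨hx1, hx2⟩, he⟩
        rw [Sym2.eq_iff] at he
        have hKx : (KG n).Adj x last ∧ ¬ (bipG n (k-1) 1).Adj x last := by
          constructor
          · exact Or.inl ⟨hx2, by omega⟩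
          · intro hadj
            simp only [bipG] at hadj
            omega
        rcases he with ⟨rfl, rfl⟩ | ⟨rfl, rfl⟩
        · exact ⟨hKx.1, hKx.2⟩
        · exact ⟨hKx.1.symm, fun h => hKx.2 h.symm⟩
  have hmissBcard : ((KG n).edgeSet \ (bipG n (k-1) 1).edgeSet).ncard = n - (k-1) := by
    rw [hmissB, Set.ncard_image_of_injOn]
    · have : {x : Fin (2*n) | k-1 ≤ x.val ∧ x.val < n}
          = ↑(univ.filter (fun x : Fin (2*n) => k-1 ≤ x.val ∧ x.val < n)) := by ext x; simp
      rw [this, Set.ncard_coe_finset, card_filter_interval _ _ _ (by omega)]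
    · intro a ha b hb hab
      rw [Sym2.eq_iff] at hab
      rcases hab with ⟨rfl, -⟩ | ⟨h1, h2⟩
      · rfl
      · simp only [Set.mem_setOf_eq] at ha hb
        have := congrArg Fin.val h1
        simp [hlast] at this
        omega
  -- the missing edges at w
  have hnbsub : G.neighborSet w ⊆ {t : Fin (2*n) | (KG n).Adj w t} := by
    intro t ht
    exact hbip w t ht
  have hoppcard : {t : Fin (2*n) | (KG n).Adj w t}.ncard = n := by
    have : {t : Fin (2*n) | (KG n).Adj w t}
        = ↑(univ.filter (fun t : Fin (2*n) =>
            (w.val < n ∧ n ≤ t.val) ∨ (t.val < n ∧ n ≤ w.val))) := by ext t; simp [KG]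
    rw [this, Set.ncard_coe_finset]
    by_cases hwlow : w.val < n
    · rw [Finset.filter_congr (q := fun t : Fin (2*n) => n ≤ t.val ∧ t.val < 2*n)
        (fun t _ => by have := t.isLt; constructor <;> intro h <;> omega)]
      rw [card_filter_interval _ _ _ (le_refl _)]; omega
    · rw [Finset.filter_congr (q := fun t : Fin (2*n) => 0 ≤ t.val ∧ t.val < n)
        (fun t _ => by have := t.isLt; constructor <;> intro h <;> omega)]
      rw [card_filter_interval _ _ _ (by omega)]; omega
  set MwS : Set (Sym2 (Fin (2*n))) :=
    (fun t => s(w,t)) '' ({t : Fin (2*n) | (KG n).Adj w t} \ G.neighborSet w) with hMwS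
  have hMsub : MwS ⊆ (KG n).edgeSet \ G.edgeSet := by
    rintro e ⟨t, ⟨h1, h2⟩, rfl⟩
    exact ⟨h1, h2⟩
  have hMcard : MwS.ncard = n - (k-1) := by
    rw [hMwS, Set.ncard_image_of_injOn]
    · rw [Set.ncard_diff hnbsub (Set.toFinite _), hoppcard, hdegw]
    · intro a ha b hb hab
      rw [Sym2.eq_iff] at hab
      rcases hab with ⟨-, h⟩ | ⟨h1, h2⟩
      · exact h
      · exact h2.trans h1
  have hMeq : MwS = (KG n).edgeSet \ G.edgeSet := by
    apply Set.eq_of_subset_of_ncard_le hMsub _ (Set.toFinite _)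
    rw [hMcard, hmissG, hmissBcard]
  refine ⟨w, hdegw, fun u v hcross hu hv => ?_⟩
  by_contra hadj
  have : s(u,v) ∈ (KG n).edgeSet \ G.edgeSet := ⟨hcross, hadj⟩
  rw [← hMeq, hMwS] at this
  obtain ⟨t, -, he⟩ := this
  rw [Sym2.eq_iff] at he
  rcases he with ⟨h1, -⟩ | ⟨h2, -⟩
  · exact hu h1.symm
  · exact hv h2.symm


end SL


open scoped Classical in
lemma main_hall (n k : ℕ) (hk : 2 ≤ k) (hn : 2*k ≤ n)
    (𝒢 : Fin (k*n) → SimpleGraph (Fin (2*n)))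
    (w : Fin (k*n) → Fin (2*n))
    (hmiss : ∀ i (u v : Fin (2*n)), ((u.val < n ∧ n ≤ v.val) ∨ (v.val < n ∧ n ≤ u.val)) →
        ¬ (𝒢 i).Adj u v → u = w i ∨ v = w i)
    (H : SimpleGraph (Fin (2*n)))
    (Hcross : ∀ u v, H.Adj u v → (u.val < n ∧ n ≤ v.val) ∨ (v.val < n ∧ n ≤ u.val))
    (Hreg : ∀ v, (H.neighborSet v).ncard = k)
    (cov : ∀ u v, H.Adj u v → ∃ i, (𝒢 i).Adj u v)
    (c2 : ∀ (v : Fin (2*n)) (T : Finset (Fin (2*n))), (∀ t ∈ T, H.Adj v t) → 2 ≤ T.card →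
        (univ.filter (fun i => ∀ t ∈ T, ¬ (𝒢 i).Adj v t)).card + T.card ≤ k*n) :
    IsRainbowFactor 𝒢 k H := by
  classical
  have hdeg : ∀ v, H.degree v = k := by
    intro v
    rw [← card_neighborFinset_eq_degree, neighborFinset_def, ← Set.ncard_eq_toFinset_card']
    exact Hreg v
  have hEcard : H.edgeFinset.card = k*n := by
    have h2 := SimpleGraph.sum_degrees_eq_twice_card_edges H
    have h3 : ∑ v, H.degree v = 2*(k*n) := by
      rw [Finset.sum_congr rfl (fun v _ => hdeg v), Finset.sum_const, card_univ,
        Fintype.card_fin, smul_eq_mul]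
      ring
    omega
  set t : Fin (k*n) → Finset (Sym2 (Fin (2*n))) :=
    fun i => H.edgeFinset.filter (fun e => e ∈ (𝒢 i).edgeSet) with ht
  have hall : ∀ S : Finset (Fin (k*n)), S.card ≤ (S.biUnion t).card := by
    intro S
    set U := H.edgeFinset \ S.biUnion t with hU
    have hsub : S.biUnion t ⊆ H.edgeFinset := by
      intro e he
      obtain ⟨i, -, hei⟩ := mem_biUnion.mp he
      exact (mem_filter.mp hei).1
    have h1 : U.card + (S.biUnion t).card = k*n := by
      rw [hU, card_sdiff_of_subset hsub]
      have := Finset.card_le_card hsub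
      omega
    suffices hS : S.card + U.card ≤ k*n by omega
    have hUnc : ∀ i ∈ S, ∀ e ∈ U, e ∉ (𝒢 i).edgeSet := by
      intro i hi e heU hmem
      exact (mem_sdiff.mp heU).2 (mem_biUnion.mpr
        ⟨i, hi, mem_filter.mpr ⟨(mem_sdiff.mp heU).1, hmem⟩⟩)
    have hUw : ∀ i ∈ S, ∀ e ∈ U, (w i) ∈ e := by
      intro i hi e heU
      have heH : e ∈ H.edgeFinset := (mem_sdiff.mp heU).1
      obtain ⟨⟨u,v⟩, rfl⟩ := e.exists_rep
      have hadj : H.Adj u v := (H.mem_edgeSet).mp (mem_edgeFinset.mp heH)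
      have hcr := Hcross u v hadj
      have hnadj : ¬(𝒢 i).Adj u v := fun h => hUnc i hi _ heU (((𝒢 i).mem_edgeSet).mpr h)
      rw [Sym2.mem_iff]
      rcases hmiss i u v hcr hnadj with h | h
      · exact Or.inl h.symm
      · exact Or.inr h.symm
    rcases Nat.lt_or_ge U.card 2 with hU2 | hU2
    · rcases Nat.lt_or_ge U.card 1 with hU1 | hU1
      · have := Finset.card_le_univ S
        rw [Fintype.card_fin] at this
        omega
      · obtain ⟨e, he⟩ := card_eq_one.mp (le_antisymm (by omega) hU1)
        have heU : e ∈ U := by rw [he]; exact mem_singleton_self e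
        have heH : e ∈ H.edgeFinset := (mem_sdiff.mp heU).1
        obtain ⟨⟨u,v⟩, rfl⟩ := e.exists_rep
        have hadj : H.Adj u v := (H.mem_edgeSet).mp (mem_edgeFinset.mp heH)
        obtain ⟨i0, hi0⟩ := cov u v hadj
        have hi0S : i0 ∉ S := by
          intro hin
          exact hUnc i0 hin _ heU (((𝒢 i0).mem_edgeSet).mpr hi0)
        have : S ⊆ univ.erase i0 := fun i hi => mem_erase.mpr ⟨fun h => hi0S (h ▸ hi), mem_univ i⟩
        have h4 := Finset.card_le_card this
        rw [Finset.card_erase_of_mem (mem_univ i0), card_univ, Fintype.card_fin] at h4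
        omega
    · rcases S.eq_empty_or_nonempty with rfl | ⟨i0, hi0S⟩
      · have : U ⊆ H.edgeFinset := sdiff_subset
        have := Finset.card_le_card this
        simp only [card_empty] at *
        omega
      · set v0 := w i0 with hv0
        obtain ⟨e1, he1, e2, he2, hne12⟩ := Finset.one_lt_card.mp hU2
        have hwS : ∀ i ∈ S, w i = v0 := by
          intro i hi
          by_contra hne'
          have a1 : w i ∈ e1 := hUw i hi e1 he1
          have a2 : w i ∈ e2 := hUw i hi e2 he2
          have b1 : v0 ∈ e1 := hUw i0 hi0S e1 he1
          have b2 : v0 ∈ e2 := hUw i0 hi0S e2 he2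
          have c1 := Sym2.eq_of_ne_mem hne' a1 b1 a2 b2
          exact hne12 c1
        set T : Finset (Fin (2*n)) :=
          U.attach.image (fun e => Sym2.Mem.other (hUw i0 hi0S e.1 e.2)) with hT
        have hTinj : ∀ (e : {x // x ∈ U}) (he : e ∈ U.attach) (e' : {x // x ∈ U})
            (he' : e' ∈ U.attach), Sym2.Mem.other (hUw i0 hi0S e.1 e.2)
              = Sym2.Mem.other (hUw i0 hi0S e'.1 e'.2) → e = e' := by
          intro e _ e' _ hee
          have s1 := Sym2.other_spec (hUw i0 hi0S e.1 e.2)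
          have s2 := Sym2.other_spec (hUw i0 hi0S e'.1 e'.2)
          apply Subtype.ext
          rw [← s1, ← s2, hee]
        have hTcard : T.card = U.card := by
          rw [hT, Finset.card_image_of_injOn (fun e he e' he' h => hTinj e he e' he' h),
            card_attach]
        have hTadj : ∀ x ∈ T, H.Adj v0 x := by
          intro x hx
          obtain ⟨e, -, rfl⟩ := mem_image.mp hx
          have s1 := Sym2.other_spec (hUw i0 hi0S e.1 e.2)
          have heH : (e : Sym2 (Fin (2*n))) ∈ H.edgeFinset := (mem_sdiff.mp e.2).1
          rw [← s1] at heH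
          exact (H.mem_edgeSet).mp (mem_edgeFinset.mp heH)
        have hSsub : S ⊆ univ.filter (fun i => ∀ x ∈ T, ¬ (𝒢 i).Adj v0 x) := by
          intro i hi
          rw [mem_filter]
          refine ⟨mem_univ i, fun x hx hadj => ?_⟩
          obtain ⟨e, -, rfl⟩ := mem_image.mp hx
          have s1 := Sym2.other_spec (hUw i0 hi0S e.1 e.2)
          have : (e : Sym2 (Fin (2*n))) ∈ (𝒢 i).edgeSet := by
            rw [← s1]; exact ((𝒢 i).mem_edgeSet).mpr hadj
          exact hUnc i hi e.1 e.2 this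
        have := c2 v0 T hTadj (by omega)
        have := Finset.card_le_card hSsub
        omega
  obtain ⟨f, hfinj, hf⟩ := (Finset.all_card_le_biUnion_card_iff_exists_injective t).mp hall
  have hfE : ∀ i, f i ∈ H.edgeSet := fun i => mem_edgeFinset.mp (mem_filter.mp (hf i)).1
  set g : Fin (k*n) → H.edgeSet := fun i => ⟨f i, hfE i⟩ with hg
  have hginj : Function.Injective g := fun a b hab => hfinj (congrArg Subtype.val hab)
  have hgbij : Function.Bijective g := by
    rw [Fintype.bijective_iff_injective_and_card]
    refine ⟨hginj, ?_⟩
    rw [Fintype.card_fin, ← SimpleGraph.edgeFinset_card, hEcard]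
  refine ⟨Hreg, (Equiv.ofBijective g hgbij).symm, fun e => ?_⟩
  have : g ((Equiv.ofBijective g hgbij).symm e) = e := (Equiv.ofBijective g hgbij).apply_symm_apply e
  have hfe : f ((Equiv.ofBijective g hgbij).symm e) = (e : Sym2 (Fin (2*n))) :=
    congrArg Subtype.val this
  have := (mem_filter.mp (hf ((Equiv.ofBijective g hgbij).symm e))).2
  rwa [hfe] at this

open scoped Classical in
lemma exists_sdr (n k : ℕ) (hk : 2 ≤ k) (hn : 2*k ≤ n)
    (𝒢 : Fin (k*n) → SimpleGraph (Fin (2*n)))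
    (hbip : ∀ i u v, (𝒢 i).Adj u v → (u.val < n ∧ n ≤ v.val) ∨ (v.val < n ∧ n ≤ u.val))
    (w : Fin (k*n) → Fin (2*n))
    (hdegw : ∀ i, ((𝒢 i).neighborSet (w i)).ncard = k - 1)
    (hchar : ∀ i (u v : Fin (2*n)), ((u.val < n ∧ n ≤ v.val) ∨ (v.val < n ∧ n ≤ u.val)) →
        u ≠ w i → v ≠ w i → (𝒢 i).Adj u v)
    (hne : ∃ t₁ t₂, 𝒢 t₁ ≠ 𝒢 t₂)
    (v₀ : Fin (2*n)) (hheavy : k*n - k < (univ.filter (fun i => w i = v₀)).card) :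
    ∃ (t : Fin k → Fin (2*n)) (idx : Fin k → Fin (k*n)), Function.Injective t ∧
      Function.Injective idx ∧ ∀ j, (𝒢 (idx j)).Adj v₀ (t j) := by
  classical
  have hkn2 : 2*(k*k) ≤ k*n := by
    have := Nat.mul_le_mul_left k hn
    calc 2*(k*k) = k*(2*k) := by ring
    _ ≤ k*n := this
  have hkk : k ≤ k*k := Nat.le_mul_of_pos_left k (by omega)
  set I := univ.filter (fun i : Fin (k*n) => w i = v₀) with hI
  have hwI : ∀ i ∈ I, w i = v₀ := fun i hi => (mem_filter.mp hi).2
  set nb : Fin (k*n) → Finset (Fin (2*n)) := fun i => (𝒢 i).neighborFinset v₀ with hnb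
  have hnbcard : ∀ i ∈ I, (nb i).card = k - 1 := by
    intro i hi
    have h0 := hdegw i
    rw [hwI i hi] at h0
    show ((𝒢 i).neighborFinset v₀).card = k - 1
    rw [neighborFinset_def, ← Set.ncard_eq_toFinset_card']
    exact h0
  have hnbmem : ∀ i x, x ∈ nb i ↔ (𝒢 i).Adj v₀ x := fun i x => mem_neighborFinset _ _ _
  -- full characterization of each graph, used for equality
  have hfull : ∀ i (u v : Fin (2*n)), (𝒢 i).Adj u v ↔
      (((u.val < n ∧ n ≤ v.val) ∨ (v.val < n ∧ n ≤ u.val)) ∧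
        (u = w i → v ∈ (𝒢 i).neighborFinset (w i)) ∧
        (v = w i → u ∈ (𝒢 i).neighborFinset (w i))) := by
    intro i u v
    constructor
    · intro h
      refine ⟨hbip i u v h, fun hu => ?_, fun hv => ?_⟩
      · rw [mem_neighborFinset, ← hu]; exact h
      · rw [mem_neighborFinset, ← hv]; exact h.symm
    · rintro ⟨hcr, h1, h2⟩
      by_cases hu : u = w i
      · have := (mem_neighborFinset _ _ _).mp (h1 hu)
        rwa [← hu] at this
      · by_cases hv : v = w i
        · have := (mem_neighborFinset _ _ _).mp (h2 hv)
          rw [← hv] at this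
          exact this.symm
        · exact hchar i u v hcr hu hv
  -- the "opposite side" of v₀
  set oppF := univ.filter (fun t : Fin (2*n) =>
      (v₀.val < n ∧ n ≤ t.val) ∨ (t.val < n ∧ n ≤ v₀.val)) with hoppF
  have hoppcard : n ≤ oppF.card := by
    rw [hoppF]
    by_cases hv : v₀.val < n
    · rw [Finset.filter_congr (q := fun t : Fin (2*n) => n ≤ t.val ∧ t.val < 2*n)
        (fun t _ => by have := t.isLt; constructor <;> intro h <;> omega)]
      rw [card_filter_interval _ _ _ (le_refl _)]; omega
    · rw [Finset.filter_congr (q := fun t : Fin (2*n) => 0 ≤ t.val ∧ t.val < n)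
        (fun t _ => by have := t.isLt; constructor <;> intro h <;> omega)]
      rw [card_filter_interval _ _ _ (by omega)]; omega
  by_cases halleq : ∀ i ∈ I, ∀ j ∈ I, nb i = nb j
  · by_cases hIuniv : I = univ
    · exfalso
      obtain ⟨t₁, t₂, ht⟩ := hne
      apply ht
      have h1 : t₁ ∈ I := hIuniv ▸ mem_univ t₁
      have h2 : t₂ ∈ I := hIuniv ▸ mem_univ t₂
      ext u v
      rw [hfull t₁, hfull t₂, hwI t₁ h1, hwI t₂ h2]
      have : (𝒢 t₁).neighborFinset v₀ = (𝒢 t₂).neighborFinset v₀ := halleq t₁ h1 t₂ h2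
      rw [this]
    · obtain ⟨istar, histar⟩ : ∃ i, i ∉ I := by
        by_contra hcon
        push_neg at hcon
        exact hIuniv (Finset.eq_univ_iff_forall.mpr hcon)
      have hInonempty : I.Nonempty := by
        rw [← Finset.card_pos]; omega
      obtain ⟨i₁, hi₁⟩ := hInonempty
      set A := nb i₁ with hA
      have hAcard : A.card = k - 1 := hnbcard i₁ hi₁
      -- k-1 distinct indices in I
      obtain ⟨J, hJsub, hJcard⟩ := Finset.exists_subset_card_eq (s := I) (n := k-1) (by omega)
      -- extra vertex
      have hextra : (oppF \ (A ∪ {w istar})).Nonempty := by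
        rw [← Finset.card_pos]
        have h1 := Finset.card_le_card_sdiff_add_card (s := oppF) (t := A ∪ {w istar})
        have h2 : (A ∪ {w istar}).card ≤ k := by
          have := Finset.card_union_le A {w istar}
          simp only [card_singleton] at this
          omega
        omega
      obtain ⟨tstar, htstar⟩ := hextra
      rw [mem_sdiff, Finset.mem_union, not_or] at htstar
      have htopp := htstar.1
      have htA := htstar.2.1
      have htw := htstar.2.2
      -- build the functions
      have hAk : A.card = k - 1 := hAcard
      set eA := A.equivFin with heA
      set eJ := J.equivFin with heJ
      refine ⟨fun j => if h : j.val < k-1 then (eA.symm ⟨j.val, hAk ▸ h⟩ : Fin (2*n)) else tstar,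
        fun j => if h : j.val < k-1 then (eJ.symm ⟨j.val, hJcard ▸ h⟩ : Fin (k*n)) else istar,
        ?_, ?_, ?_⟩
      · intro a b hab
        by_cases ha : a.val < k-1 <;> by_cases hb : b.val < k-1 <;>
          simp only [ha, hb, dif_pos, dif_neg, not_false_iff] at hab
        · have := Subtype.ext hab
          have := eA.symm.injective this
          exact Fin.val_injective (by simpa using congrArg Fin.val this)
        · exact absurd (hab ▸ (eA.symm ⟨a.val, hAk ▸ ha⟩).2) htA
        · exact absurd (hab ▸ (eA.symm ⟨b.val, hAk ▸ hb⟩).2) htA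
        · have h1 := a.isLt; have h2 := b.isLt
          exact Fin.val_injective (by omega)
      · intro a b hab
        by_cases ha : a.val < k-1 <;> by_cases hb : b.val < k-1 <;>
          simp only [ha, hb, dif_pos, dif_neg, not_false_iff] at hab
        · have := Subtype.ext hab
          have := eJ.symm.injective this
          exact Fin.val_injective (by simpa using congrArg Fin.val this)
        · exact absurd (hJsub (hab ▸ (eJ.symm ⟨a.val, hJcard ▸ ha⟩).2)) histar
        · exact absurd (hJsub (hab ▸ (eJ.symm ⟨b.val, hJcard ▸ hb⟩).2)) histar
        · have h1 := a.isLt; have h2 := b.isLt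
          exact Fin.val_injective (by omega)
      · intro j
        by_cases h : j.val < k-1 <;> simp only [h, dif_pos, dif_neg, not_false_iff]
        · set i' := (eJ.symm ⟨j.val, hJcard ▸ h⟩ : Fin (k*n)) with hi'
          have hi'I : (i' : Fin (k*n)) ∈ I := hJsub (eJ.symm ⟨j.val, hJcard ▸ h⟩).2
          have : nb i' = A := halleq i' hi'I i₁ hi₁
          rw [← hnbmem, this]
          exact (eA.symm ⟨j.val, hAk ▸ h⟩).2
        · apply hchar istar v₀ tstar
          · simpa [hoppF] using (mem_filter.mp htopp).2
          · intro hcon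
            apply histar
            rw [hI, mem_filter]
            exact ⟨mem_univ _, hcon.symm⟩
          · exact htw ∘ Finset.mem_singleton.mpr
  · push_neg at halleq
    obtain ⟨p, hpI, q, hqI, hpq⟩ := halleq
    have hdiffne : ∀ a b, a ∈ I → b ∈ I → nb a ≠ nb b → (nb a \ nb b).Nonempty := by
      intro a b ha hb hab
      rw [Finset.sdiff_nonempty]
      intro hsub
      exact hab (Finset.eq_of_subset_of_card_le hsub (by rw [hnbcard a ha, hnbcard b hb]))
    by_cases hbig : ∃ r ∈ I, k ≤ (I.filter (fun i => nb i = nb r)).card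
    · obtain ⟨r, hrI, hrcard⟩ := hbig
      obtain ⟨p', hp'I, hp'ne⟩ : ∃ p' ∈ I, nb p' ≠ nb r := by
        by_cases hpr : nb p = nb r
        · exact ⟨q, hqI, fun h => hpq (hpr ▸ h ▸ rfl)⟩
        · exact ⟨p, hpI, hpr⟩
      obtain ⟨a, ha⟩ := hdiffne p' r hp'I hrI hp'ne
      rw [mem_sdiff] at ha
      set F := (I.filter (fun i => nb i = nb r)).erase p' with hF
      have hFcard : k - 1 ≤ F.card := by
        rw [hF]
        have := Finset.card_erase_of_mem (s := I.filter (fun i => nb i = nb r)) (a := p')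
        by_cases hp'F : p' ∈ I.filter (fun i => nb i = nb r)
        · rw [this hp'F]; omega
        · rw [Finset.erase_eq_of_notMem hp'F]; omega
      obtain ⟨J, hJsub, hJcard⟩ := Finset.exists_subset_card_eq (s := F) (n := k-1) hFcard
      have hRcard : (nb r).card = k - 1 := hnbcard r hrI
      set eR := (nb r).equivFin with heR
      set eJ := J.equivFin with heJ
      refine ⟨fun j => if h : j.val < k-1 then (eR.symm ⟨j.val, hRcard ▸ h⟩ : Fin (2*n)) else a,
        fun j => if h : j.val < k-1 then (eJ.symm ⟨j.val, hJcard ▸ h⟩ : Fin (k*n)) else p',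
        ?_, ?_, ?_⟩
      · intro x y hxy
        by_cases hx : x.val < k-1 <;> by_cases hy : y.val < k-1 <;>
          simp only [hx, hy, dif_pos, dif_neg, not_false_iff] at hxy
        · have := eR.symm.injective (Subtype.ext hxy)
          exact Fin.val_injective (by simpa using congrArg Fin.val this)
        · exact absurd (hxy ▸ (eR.symm ⟨x.val, hRcard ▸ hx⟩).2) ha.2
        · exact absurd (hxy ▸ (eR.symm ⟨y.val, hRcard ▸ hy⟩).2) ha.2
        · have h1 := x.isLt; have h2 := y.isLt
          exact Fin.val_injective (by omega)
      · intro x y hxy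
        have hp'J : p' ∉ J := fun hcon => (Finset.notMem_erase p' _) (hJsub hcon)
        by_cases hx : x.val < k-1 <;> by_cases hy : y.val < k-1 <;>
          simp only [hx, hy, dif_pos, dif_neg, not_false_iff] at hxy
        · have := eJ.symm.injective (Subtype.ext hxy)
          exact Fin.val_injective (by simpa using congrArg Fin.val this)
        · exact absurd (hxy ▸ (eJ.symm ⟨x.val, hJcard ▸ hx⟩).2) hp'J
        · exact absurd (hxy ▸ (eJ.symm ⟨y.val, hJcard ▸ hy⟩).2) hp'J
        · have h1 := x.isLt; have h2 := y.isLt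
          exact Fin.val_injective (by omega)
      · intro j
        by_cases h : j.val < k-1 <;> simp only [h, dif_pos, dif_neg, not_false_iff]
        · set i' := (eJ.symm ⟨j.val, hJcard ▸ h⟩ : Fin (k*n)) with hi'
          have hi'J : (i' : Fin (k*n)) ∈ J := (eJ.symm ⟨j.val, hJcard ▸ h⟩).2
          have hi'F := hJsub hi'J
          rw [hF, Finset.mem_erase] at hi'F
          have : nb i' = nb r := (mem_filter.mp hi'F.2).2
          rw [← hnbmem, this]
          exact (eR.symm ⟨j.val, hRcard ▸ h⟩).2
        · rw [← hnbmem]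
          exact ha.1
    · push_neg at hbig
      set values := I.image nb with hvalues
      have hIbound : I.card ≤ values.card * (k-1) := by
        rw [Finset.card_eq_sum_card_fiberwise (f := nb) (t := values)
          (fun x hx => mem_image_of_mem nb hx)]
        calc ∑ b ∈ values, (I.filter (fun i => nb i = b)).card
            ≤ ∑ _b ∈ values, (k-1) := by
              apply Finset.sum_le_sum
              intro b hb
              obtain ⟨r, hrI, rfl⟩ := mem_image.mp hb
              have := hbig r hrI
              omega
          _ = values.card * (k-1) := by rw [Finset.sum_const, smul_eq_mul]
      have hvk : k ≤ values.card := by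
        by_contra hcon
        push_neg at hcon
        have h1 : values.card * (k-1) ≤ (k-1)*(k-1) :=
          Nat.mul_le_mul (by omega) (le_refl _)
        have h2 : (k-1)*(k-1) < k*k := by
          have hm : k - 1 + 1 = k := by omega
          have hr : (k-1+1)*(k-1+1) = (k-1)*(k-1) + 2*(k-1) + 1 := by ring
          rw [hm] at hr
          omega
        omega
      obtain ⟨D, hDsub, hDcard⟩ := Finset.exists_subset_card_eq (s := values) (n := k) hvk
      have hDmemcard : ∀ b ∈ D, b.card = k - 1 := by
        intro b hb
        obtain ⟨r, hrI, rfl⟩ := mem_image.mp (hDsub hb)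
        exact hnbcard r hrI
      -- Hall for the k distinct sets in D
      have hallD : ∀ s : Finset {x // x ∈ D}, s.card ≤ (s.biUnion (fun d => (d : Finset (Fin (2*n))))).card := by
        intro s
        rcases Nat.lt_or_ge s.card 2 with hs | hs
        · rcases Nat.lt_or_ge s.card 1 with hs0 | hs1
          · omega
          · have hpos : 0 < s.card := by omega
            obtain ⟨d, hd⟩ := Finset.card_pos.mp hpos
            have : (d : Finset (Fin (2*n))) ⊆ s.biUnion (fun d => (d : Finset (Fin (2*n)))) :=
              fun x hx => mem_biUnion.mpr ⟨d, hd, hx⟩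
            have h2 := Finset.card_le_card this
            have h3 := hDmemcard d.1 d.2
            omega
        · obtain ⟨d, hd, d', hd', hdd'⟩ := Finset.one_lt_card.mp hs
          have hvalne : (d : Finset (Fin (2*n))) ≠ (d' : Finset (Fin (2*n))) :=
            fun h => hdd' (Subtype.ext h)
          have hsub : (d : Finset (Fin (2*n))) ∪ (d' : Finset (Fin (2*n)))
              ⊆ s.biUnion (fun d => (d : Finset (Fin (2*n)))) := by
            intro x hx
            rcases Finset.mem_union.mp hx with h | h
            · exact mem_biUnion.mpr ⟨d, hd, h⟩
            · exact mem_biUnion.mpr ⟨d', hd', h⟩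
          have hdne : ((d' : Finset (Fin (2*n))) \ (d : Finset (Fin (2*n)))).Nonempty := by
            rw [Finset.sdiff_nonempty]
            intro hsub'
            exact hvalne (Finset.eq_of_subset_of_card_le hsub'
              (by rw [hDmemcard d.1 d.2, hDmemcard d'.1 d'.2])).symm
          have hucard : k ≤ ((d : Finset (Fin (2*n))) ∪ (d' : Finset (Fin (2*n)))).card := by
            have h4 := Finset.card_sdiff_add_card (s := (d' : Finset (Fin (2*n))))
              (t := (d : Finset (Fin (2*n))))
            rw [Finset.union_comm]
            have h5 := Finset.card_pos.mpr hdne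
            have h6 := hDmemcard d.1 d.2
            omega
          have h2 := Finset.card_le_card hsub
          have h3 : s.card ≤ k := by
            have := Finset.card_le_univ s
            rw [Fintype.card_coe, hDcard] at this
            exact this
          omega
      obtain ⟨f, hfinj, hf⟩ :=
        (Finset.all_card_le_biUnion_card_iff_exists_injective
          (fun d : {x // x ∈ D} => (d : Finset (Fin (2*n))))).mp hallD
      have hpick : ∀ d : {x // x ∈ D}, ∃ i, i ∈ I ∧ nb i = d.1 := by
        intro d
        obtain ⟨r, hr, hrr⟩ := mem_image.mp (hDsub d.2)
        exact ⟨r, hr, hrr⟩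
      choose pick hpickI hpicknb using hpick
      have hpickinj : Function.Injective pick := by
        intro d d' hdd
        apply Subtype.ext
        rw [← hpicknb d, ← hpicknb d', hdd]
      have hDk : D.card = k := hDcard
      set e : {x // x ∈ D} ≃ Fin k := D.equivFin.trans (finCongr hDk) with he
      refine ⟨fun j => f (e.symm j), fun j => pick (e.symm j),
        fun a b hab => e.symm.injective (hfinj hab),
        fun a b hab => e.symm.injective (hpickinj hab), fun j => ?_⟩
      rw [← hnbmem, hpicknb (e.symm j)]
      exact hf (e.symm j)


section Bridge
variable (n k : ℕ) (hn : 0 < n) (τ σ : Equiv.Perm (Fin n))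

lemma Hg_ncard (hk : k ≤ n) (v : Fin (2*n)) : ((Hg n k hn τ σ).neighborSet v).ncard = k := by
  have h1 : ((Hg n k hn τ σ).neighborSet v).ncard
      = Nat.card ((Hg n k hn τ σ).neighborSet v) := (Nat.card_coe_set_eq _).symm
  rw [h1, Nat.card_eq_fintype_card, card_neighborSet_eq_degree, Hg_degree n k hn τ σ hk v]

lemma exists_Hg_nbhd_set (hkn : k ≤ n) (v₀ : Fin (2*n)) (T₀ : Finset (Fin (2*n)))
    (hcard : T₀.card = k)
    (hopp : ∀ t ∈ T₀, (v₀.val < n ∧ n ≤ t.val) ∨ (t.val < n ∧ n ≤ v₀.val)) :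
    ∃ τ σ : Equiv.Perm (Fin n), ∀ x, (Hg n k hn τ σ).Adj v₀ x ↔ x ∈ T₀ := by
  obtain ⟨τ', σ', h⟩ := exists_Hg_nbhd n k hn hkn v₀ T₀ hcard hopp
  exact ⟨τ', σ', fun x => by rw [← h, mem_neighborFinset]⟩

end Bridge

end MyHelpers
open Finset

/-- if every Gᵢ ≅ B_{n,k} but the family is not constant, then it
admits a rainbow k-factor. -/
theorem stmt12 (n k : ℕ) (hk : 2 ≤ k) (hn : 2*k ≤ n)
    (𝒢 : Fin (k*n) → SimpleGraph (Fin (2*n)))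
    (hbip : ∀ i u v, (𝒢 i).Adj u v → (u.val < n ∧ n ≤ v.val) ∨ (v.val < n ∧ n ≤ u.val))
    (hiso : ∀ i, Nonempty (𝒢 i ≃g bipG n (k-1) 1))
    (hne : ∃ t₁ t₂, 𝒢 t₁ ≠ 𝒢 t₂) :
    ∃ H, IsRainbowFactor 𝒢 k H := by
  classical
  have hn0 : 0 < n := by omega
  have hkln : k < n := by omega
  have hkkn : k ≤ k*n := Nat.le_mul_of_pos_right k (by omega)
  choose w hdegw hchar using fun i => structure_lemma n k hk hn (𝒢 i) (hbip i) (hiso i)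
  have hmiss : ∀ i (u v : Fin (2*n)), ((u.val < n ∧ n ≤ v.val) ∨ (v.val < n ∧ n ≤ u.val)) →
      ¬ (𝒢 i).Adj u v → u = w i ∨ v = w i := by
    intro i u v hcr hnadj
    by_contra hcon
    push_neg at hcon
    exact hnadj (hchar i u v hcr hcon.1 hcon.2)
  -- generic claim: filters at distinct vertices are `≤ kn` together
  have hfilter2 : ∀ v v' : Fin (2*n), v ≠ v' →
      (univ.filter (fun i => w i = v)).card + (univ.filter (fun i => w i = v')).card ≤ k*n := by
    intro v v' hvv
    rw [← Finset.card_union_of_disjoint]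
    · have := Finset.card_le_univ ((univ.filter (fun i => w i = v)) ∪ (univ.filter (fun i => w i = v')))
      rwa [Fintype.card_fin] at this
    · refine Finset.disjoint_left.mpr ?_
      intro i hi hi'
      exact hvv (((mem_filter.mp hi).2.symm).trans (mem_filter.mp hi').2)
  -- generic piece of C2: such filters land in I_v
  have hfsub : ∀ (v : Fin (2*n)) (T : Finset (Fin (2*n))), 2 ≤ T.card →
      (∀ t ∈ T, ((v.val < n ∧ n ≤ t.val) ∨ (t.val < n ∧ n ≤ v.val))) →
      univ.filter (fun i => ∀ t ∈ T, ¬ (𝒢 i).Adj v t) ⊆ univ.filter (fun i => w i = v) := by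
    intro v T hT2 hTcr i hi
    rw [mem_filter] at hi ⊢
    refine ⟨mem_univ i, ?_⟩
    obtain ⟨t₁, ht₁, t₂, ht₂, hne12⟩ := Finset.one_lt_card.mp hT2
    by_contra hwiv
    have hco : ∀ t ∈ T, t = w i := by
      intro t ht
      rcases hmiss i v t (hTcr t ht) (hi.2 t ht) with h | h
      · exact absurd h.symm hwiv
      · exact h
    exact hne12 ((hco t₁ ht₁).trans (hco t₂ ht₂).symm)
  by_cases hheavy : ∃ v₀, k*n - k < (univ.filter (fun i => w i = v₀)).card
  · obtain ⟨v₀, hv₀⟩ := hheavy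
    obtain ⟨t, idx, htinj, hidxinj, hadj⟩ :=
      exists_sdr n k hk hn 𝒢 hbip w hdegw hchar hne v₀ hv₀
    set T₀ := univ.image t with hT₀
    have hT₀card : T₀.card = k := by
      rw [hT₀, Finset.card_image_of_injective _ htinj, card_univ, Fintype.card_fin]
    have hT₀opp : ∀ x ∈ T₀, (v₀.val < n ∧ n ≤ x.val) ∨ (x.val < n ∧ n ≤ v₀.val) := by
      intro x hx
      obtain ⟨j, -, rfl⟩ := mem_image.mp hx
      exact hbip _ _ _ (hadj j)
    obtain ⟨τ, σ, hN⟩ := exists_Hg_nbhd_set n k hn0 (by omega) v₀ T₀ hT₀card hT₀opp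
    set H := Hg n k hn0 τ σ with hH
    refine ⟨H, main_hall n k hk hn 𝒢 w hmiss H
      (fun u v h => Hg_cross n k hn0 τ σ h)
      (fun v => Hg_ncard n k hn0 τ σ (by omega) v) ?_ ?_⟩
    · -- cov
      intro u v huv
      by_cases hu : v₀ = u
      · subst hu
        have : v ∈ T₀ := (hN v).mp huv
        obtain ⟨j, -, rfl⟩ := mem_image.mp this
        exact ⟨idx j, hadj j⟩
      · by_cases hv : v₀ = v
        · subst hv
          have : u ∈ T₀ := (hN u).mp huv.symm
          obtain ⟨j, -, rfl⟩ := mem_image.mp this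
          exact ⟨idx j, (hadj j).symm⟩
        · have hIne : (univ.filter (fun i => w i = v₀)).Nonempty := by
            rw [← Finset.card_pos]; omega
          obtain ⟨i₀, hi₀⟩ := hIne
          have hwi₀ : w i₀ = v₀ := (mem_filter.mp hi₀).2
          exact ⟨i₀, hchar i₀ u v (Hg_cross n k hn0 τ σ huv)
            (fun h => hu (h.trans hwi₀).symm) (fun h => hv (h.trans hwi₀).symm)⟩
    · -- c2
      intro v T hTadj hT2
      have hTcr : ∀ x ∈ T, ((v.val < n ∧ n ≤ x.val) ∨ (x.val < n ∧ n ≤ v.val)) :=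
        fun x hx => Hg_cross n k hn0 τ σ (hTadj x hx)
      by_cases hvv₀ : v = v₀
      · subst hvv₀
        have hTsub : T ⊆ T₀ := fun x hx => (hN x).mp (hTadj x hx)
        set J := univ.filter (fun j : Fin k => t j ∈ T) with hJ
        have himg : T = J.image t := by
          ext x
          constructor
          · intro hx
            obtain ⟨j, -, rfl⟩ := mem_image.mp (hTsub hx)
            exact mem_image.mpr ⟨j, mem_filter.mpr ⟨mem_univ j, hx⟩, rfl⟩
          · intro hx
            obtain ⟨j, hj, rfl⟩ := mem_image.mp hx
            exact (mem_filter.mp hj).2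
        have hTJ : T.card = J.card := by
          rw [himg, Finset.card_image_of_injective _ htinj]
        have hdisj : Disjoint (univ.filter (fun i => ∀ x ∈ T, ¬ (𝒢 i).Adj v x)) (J.image idx) := by
          rw [Finset.disjoint_right]
          intro i hiJ hif
          obtain ⟨j, hj, rfl⟩ := mem_image.mp hiJ
          exact (mem_filter.mp hif).2 (t j) ((mem_filter.mp hj).2) (hadj j)
        have hc := Finset.card_le_univ
          ((univ.filter (fun i => ∀ x ∈ T, ¬ (𝒢 i).Adj v x)) ∪ (J.image idx))
        rw [Finset.card_union_of_disjoint hdisj, Fintype.card_fin,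
          Finset.card_image_of_injective _ hidxinj] at hc
        omega
      · have h1 := Finset.card_le_card (hfsub v T hT2 hTcr)
        have h2 := hfilter2 v v₀ hvv₀
        have h2k : k*2 ≤ k*n := Nat.mul_le_mul_left k (by omega)
        have h3 : T.card ≤ k := by
          have hsub : T ⊆ univ.filter (fun x => (Hg n k hn0 τ σ).Adj v x) := by
            intro x hx
            exact mem_filter.mpr ⟨mem_univ x, hTadj x hx⟩
          have h4 := Finset.card_le_card hsub
          have h5 : (univ.filter (fun x => (Hg n k hn0 τ σ).Adj v x)).card = k := by
            have h6 := Hg_ncard n k hn0 τ σ (by omega) v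
            have h7 : (univ.filter (fun x => (Hg n k hn0 τ σ).Adj v x))
                = ((Hg n k hn0 τ σ).neighborSet v).toFinset := by
              ext x
              simp [Set.mem_toFinset]
            rw [h7, ← Set.ncard_eq_toFinset_card']
            exact h6
          omega
        omega
  · push_neg at hheavy
    have c2gen : ∀ (H : SimpleGraph (Fin (2*n)))
        (_ : ∀ u v, H.Adj u v → (u.val < n ∧ n ≤ v.val) ∨ (v.val < n ∧ n ≤ u.val))
        (_ : ∀ v, (H.neighborSet v).ncard = k),
        ∀ (v : Fin (2*n)) (T : Finset (Fin (2*n))), (∀ t ∈ T, H.Adj v t) → 2 ≤ T.card →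
        (univ.filter (fun i => ∀ t ∈ T, ¬ (𝒢 i).Adj v t)).card + T.card ≤ k*n := by
      intro H Hcross Hreg v T hTadj hT2
      have hTcr : ∀ x ∈ T, ((v.val < n ∧ n ≤ x.val) ∨ (x.val < n ∧ n ≤ v.val)) :=
        fun x hx => Hcross v x (hTadj x hx)
      have h1 := Finset.card_le_card (hfsub v T hT2 hTcr)
      have h2 := hheavy v
      have h2k : k*2 ≤ k*n := Nat.mul_le_mul_left k (by omega)
      have h3 : T.card ≤ k := by
        have hsub : T ⊆ (H.neighborSet v).toFinset := by
          intro x hx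
          rw [Set.mem_toFinset]
          exact hTadj x hx
        have h4 := Finset.card_le_card hsub
        rw [← Set.ncard_eq_toFinset_card', Hreg v] at h4
        exact h4
      omega
    by_cases hbad : ∃ x y : Fin (2*n), ((x.val < n ∧ n ≤ y.val) ∨ (y.val < n ∧ n ≤ x.val)) ∧
        ∀ i, ¬ (𝒢 i).Adj x y
    · obtain ⟨x, y, hxy, hnone⟩ := hbad
      obtain ⟨τ, σ, havoid⟩ := exists_Hg_avoid n k hn0 (by omega) x y
      set H := Hg n k hn0 τ σ with hH
      have Hcross : ∀ u v, H.Adj u v → (u.val < n ∧ n ≤ v.val) ∨ (v.val < n ∧ n ≤ u.val) :=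
        fun u v h => Hg_cross n k hn0 τ σ h
      have Hreg : ∀ v, (H.neighborSet v).ncard = k :=
        fun v => Hg_ncard n k hn0 τ σ (by omega) v
      refine ⟨H, main_hall n k hk hn 𝒢 w hmiss H Hcross Hreg ?_ (c2gen H Hcross Hreg)⟩
      intro u v huv
      by_contra hno
      push_neg at hno
      have huvne : u ≠ v := H.ne_of_adj huv
      have hxyne : x ≠ y := by
        rcases hxy with ⟨h1, h2⟩ | ⟨h1, h2⟩ <;> (intro h; subst h; omega)
      have hwuv : ∀ i, w i = u ∨ w i = v := by
        intro i
        rcases hmiss i u v (Hcross u v huv) (hno i) with h | h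
        · exact Or.inl h.symm
        · exact Or.inr h.symm
      have hwxy : ∀ i, w i = x ∨ w i = y := by
        intro i
        rcases hmiss i x y hxy (hnone i) with h | h
        · exact Or.inl h.symm
        · exact Or.inr h.symm
      have hcardz : ∀ z : Fin (2*n), ¬ (∀ i, w i = z) := by
        intro z hz
        have : univ.filter (fun i => w i = z) = univ := by
          apply Finset.eq_univ_iff_forall.mpr
          intro i
          exact mem_filter.mpr ⟨mem_univ i, hz i⟩
        have h2 := hheavy z
        rw [this, card_univ, Fintype.card_fin] at h2
        omega
      -- obtain indices with w = u and w = v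
      have hexu : ∃ i, w i = u := by
        by_contra hcon
        push_neg at hcon
        exact hcardz v (fun i => (hwuv i).resolve_left (hcon i))
      have hexv : ∃ i, w i = v := by
        by_contra hcon
        push_neg at hcon
        exact hcardz u (fun i => (hwuv i).resolve_right (hcon i))
      obtain ⟨iu, hiu⟩ := hexu
      obtain ⟨iv, hiv⟩ := hexv
      have hu_mem : u = x ∨ u = y := by
        rcases hwxy iu with h | h
        · exact Or.inl (hiu.symm.trans h)
        · exact Or.inr (hiu.symm.trans h)
      have hv_mem : v = x ∨ v = y := by
        rcases hwxy iv with h | h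
        · exact Or.inl (hiv.symm.trans h)
        · exact Or.inr (hiv.symm.trans h)
      apply havoid
      rcases hu_mem with rfl | rfl <;> rcases hv_mem with h | h
      · exact absurd h.symm huvne
      · rw [← h]; exact huv
      · rw [← h]; exact huv.symm
      · exact absurd h.symm huvne
    · push_neg at hbad
      set H := Hg n k hn0 1 1 with hH
      have Hcross : ∀ u v, H.Adj u v → (u.val < n ∧ n ≤ v.val) ∨ (v.val < n ∧ n ≤ u.val) :=
        fun u v h => Hg_cross n k hn0 1 1 h
      have Hreg : ∀ v, (H.neighborSet v).ncard = k :=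
        fun v => Hg_ncard n k hn0 1 1 (by omega) v
      exact ⟨H, main_hall n k hk hn 𝒢 w hmiss H Hcross Hreg
        (fun u v huv => hbad u v (Hcross u v huv)) (c2gen H Hcross Hreg)⟩
end

section
/- Let 𝒢 = {G₁, …, G_n} be a family of balanced bipartite graphs on vertex set [2n] with common bipartition (X, Y), each part of size n. If ρ(Gᵢ) ≥ √(n(n−1)) for all i ∈ [n], then 𝒢 contains a rainbow perfect matching unless G₁ = G₂ = ⋯ = G_n ≅ K_{n-1,n} ∪ K₁. -/
open SimpleGraph

open SimpleGraph Finset Matrix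

section Spectral
open scoped Classical

variable {n : ℕ}

def castX (n : ℕ) (k : Fin n) : Fin (2*n) := ⟨k.val, by omega⟩
def castY (n : ℕ) (l : Fin n) : Fin (2*n) := ⟨n + l.val, by omega⟩

lemma castX_lt (k : Fin n) : (castX n k).val < n := k.isLt
lemma castY_ge (l : Fin n) : n ≤ (castY n l).val := Nat.le_add_right _ _

/-- Equivalence Fin n ⊕ Fin n ≃ Fin (2*n) hitting castX/castY. -/
def e2 (n : ℕ) : Fin n ⊕ Fin n ≃ Fin (2*n) :=
  finSumFinEquiv.trans (finCongr (two_mul n).symm)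

lemma e2_inl (k : Fin n) : e2 n (Sum.inl k) = castX n k := by
  apply Fin.ext
  simp [e2, castX, finSumFinEquiv, finCongr]

lemma e2_inr (l : Fin n) : e2 n (Sum.inr l) = castY n l := by
  apply Fin.ext
  simp [e2, castY, finSumFinEquiv, finCongr]
  omega

lemma gram_eig_le_trace {a b : ℕ} (B : Matrix (Fin a) (Fin b) ℝ) (w : Fin a → ℝ)
    (hw : w ≠ 0) (ν : ℝ) (h : (B * Bᵀ).mulVec w = ν • w) :
    ν ≤ ∑ k, ∑ l, (B k l)^2 := by
  set u : Fin b → ℝ := Bᵀ.mulVec w with hu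
  have hs : 0 < ∑ k, (w k)^2 := by
    rcases Function.ne_iff.mp hw with ⟨k, hk⟩
    have hk' : w k ≠ 0 := by simpa using hk
    have h2 : (0:ℝ) < (w k)^2 := by rcases hk'.lt_or_gt with h|h <;> nlinarith
    exact lt_of_lt_of_le h2
      (Finset.single_le_sum (f := fun i => (w i)^2) (fun i _ => sq_nonneg _) (mem_univ k))
  have key : ν * ∑ k, (w k)^2 = ∑ l, (u l)^2 := by
    have h1 : ∀ k, ((B * Bᵀ).mulVec w) k = ν * w k := by
      intro k; rw [h]; rfl
    have h2 : ∑ k, w k * ((B * Bᵀ).mulVec w) k = ∑ k, w k * (ν * w k) := by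
      refine Finset.sum_congr rfl fun k _ => by rw [h1]
    calc ν * ∑ k, (w k)^2 = ∑ k, w k * (ν * w k) := by
          rw [Finset.mul_sum]; refine Finset.sum_congr rfl fun k _ => by ring
      _ = ∑ k, w k * ((B * Bᵀ).mulVec w) k := h2.symm
      _ = ∑ k, w k * ∑ l, B k l * u l := by
          refine Finset.sum_congr rfl fun k _ => ?_
          rw [← Matrix.mulVec_mulVec]
          rfl
      _ = ∑ k, ∑ l, w k * (B k l * u l) := by
          refine Finset.sum_congr rfl fun k _ => Finset.mul_sum _ _ _
      _ = ∑ l, ∑ k, w k * (B k l * u l) := Finset.sum_comm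
      _ = ∑ l, (u l)^2 := by
          refine Finset.sum_congr rfl fun l _ => ?_
          have hul : u l = ∑ k, B k l * w k := by
            simp [hu, Matrix.mulVec, dotProduct, Matrix.transpose_apply]
          calc ∑ k, w k * (B k l * u l) = (∑ k, B k l * w k) * u l := by
                rw [Finset.sum_mul]; exact Finset.sum_congr rfl fun k _ => by ring
            _ = (u l)^2 := by rw [← hul]; ring
  have bound : ∀ l, (u l)^2 ≤ (∑ k, (B k l)^2) * ∑ k, (w k)^2 := by
    intro l
    have : u l = ∑ k, B k l * w k := by
      simp [hu, Matrix.mulVec, dotProduct, Matrix.transpose_apply]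
    rw [this]
    exact Finset.sum_mul_sq_le_sq_mul_sq _ _ _
  have : ν * ∑ k, (w k)^2 ≤ (∑ k, ∑ l, (B k l)^2) * ∑ k, (w k)^2 := by
    rw [key]
    calc ∑ l, (u l)^2 ≤ ∑ l, (∑ k, (B k l)^2) * ∑ k, (w k)^2 :=
          Finset.sum_le_sum fun l _ => bound l
      _ = (∑ l, ∑ k, (B k l)^2) * ∑ k, (w k)^2 := by rw [← Finset.sum_mul]
      _ = (∑ k, ∑ l, (B k l)^2) * ∑ k, (w k)^2 := by rw [Finset.sum_comm]
  exact le_of_mul_le_mul_right this hs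

lemma edge_lower (n : ℕ) (G : SimpleGraph (Fin (2*n)))
    (hbip : ∀ u v, G.Adj u v → (u.val < n ∧ n ≤ v.val) ∨ (v.val < n ∧ n ≤ u.val))
    (hρ : Real.sqrt ((n:ℝ)*((n:ℝ)-1)) ≤ specRad G) :
    (n:ℝ)*((n:ℝ)-1) ≤
      ((univ.filter fun c : Fin n × Fin n => G.Adj (castX n c.1) (castY n c.2)).card : ℝ) := by
  rcases Nat.lt_or_ge n 2 with hn | hn
  · interval_cases n <;> simp
  have hnn : (0:ℝ) ≤ (n:ℝ)*((n:ℝ)-1) := by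
    have : (2:ℝ) ≤ (n:ℝ) := by exact_mod_cast hn
    nlinarith
  set A := @SimpleGraph.adjMatrix ℝ (Fin (2*n)) G (Classical.decRel _) _ _ with hA
  set S := {x : ℝ | Module.End.HasEigenvalue (Matrix.toLin' A) x} with hS
  have hfin : S.Finite := Module.End.finite_hasEigenvalue _
  have hne : S.Nonempty := by
    by_contra hemp
    rw [Set.not_nonempty_iff_eq_empty] at hemp
    have h0 : specRad G = 0 := by
      have : specRad G = sSup S := rfl
      rw [this, hemp, Real.sSup_empty]
    rw [h0] at hρ
    have : (0:ℝ) < Real.sqrt ((n:ℝ)*((n:ℝ)-1)) := by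
      apply Real.sqrt_pos.mpr
      have : (2:ℝ) ≤ (n:ℝ) := by exact_mod_cast hn
      nlinarith
    linarith
  have hμmem : sSup S ∈ S := hne.csSup_mem hfin
  set μ := sSup S with hμ
  have hμge : Real.sqrt ((n:ℝ)*((n:ℝ)-1)) ≤ μ := hρ
  have hμ0 : 0 ≤ μ := le_trans (Real.sqrt_nonneg _) hμge
  have hμsq : (n:ℝ)*((n:ℝ)-1) ≤ μ^2 := by
    have := Real.sq_sqrt hnn
    nlinarith [Real.sqrt_nonneg ((n:ℝ)*((n:ℝ)-1))]
  obtain ⟨v, hvec⟩ := hμmem.exists_hasEigenvector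
  have hv0 : v ≠ 0 := hvec.right
  have hv : A.mulVec v = μ • v := by
    have := hvec.apply_eq_smul
    rwa [Matrix.toLin'_apply] at this
  have hAapp : ∀ z z', A z z' = if G.Adj z z' then 1 else 0 := fun z z' => by
    rw [hA, SimpleGraph.adjMatrix_apply]
  have hAX : ∀ z z' : Fin (2*n), z.val < n → z'.val < n → A z z' = 0 := by
    intro z z' h1 h2
    rw [hAapp]
    split_ifs with h
    · rcases hbip _ _ h with ⟨_, h3⟩ | ⟨_, h3⟩ <;> omega
    · rfl
  have hAY : ∀ z z' : Fin (2*n), n ≤ z.val → n ≤ z'.val → A z z' = 0 := by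
    intro z z' h1 h2
    rw [hAapp]
    split_ifs with h
    · rcases hbip _ _ h with ⟨h3, _⟩ | ⟨h3, _⟩ <;> omega
    · rfl
  set M : Matrix (Fin n) (Fin n) ℝ := fun k l => A (castX n k) (castY n l) with hM
  set p : Fin n → ℝ := fun k => v (castX n k) with hp
  set q : Fin n → ℝ := fun l => v (castY n l) with hq
  have hsplit : ∀ g : Fin (2*n) → ℝ,
      ∑ z, g z = (∑ k, g (castX n k)) + ∑ l, g (castY n l) := by
    intro g
    calc ∑ z, g z = ∑ s : Fin n ⊕ Fin n, g (e2 n s) := (Equiv.sum_comp (e2 n) g).symm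
      _ = (∑ k, g (e2 n (Sum.inl k))) + ∑ l, g (e2 n (Sum.inr l)) := Fintype.sum_sum_type _
      _ = (∑ k, g (castX n k)) + ∑ l, g (castY n l) := by simp only [e2_inl, e2_inr]
  have hmv : ∀ z, (A.mulVec v) z = ∑ z', A z z' * v z' := by
    intro z; simp [Matrix.mulVec, dotProduct]
  have hMq : M.mulVec q = μ • p := by
    funext k
    have h1 := congrFun hv (castX n k)
    rw [hmv, hsplit (fun z' => A (castX n k) z' * v z')] at h1
    have h2 : (∑ k', A (castX n k) (castX n k') * v (castX n k')) = 0 := by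
      apply Finset.sum_eq_zero
      intro k' _
      rw [hAX _ _ (castX_lt k) (castX_lt k'), zero_mul]
    rw [h2, zero_add] at h1
    simpa [Matrix.mulVec, dotProduct] using h1
  have hMp : Mᵀ.mulVec p = μ • q := by
    funext l
    have h1 := congrFun hv (castY n l)
    rw [hmv, hsplit (fun z' => A (castY n l) z' * v z')] at h1
    have h2 : (∑ l', A (castY n l) (castY n l') * v (castY n l')) = 0 := by
      apply Finset.sum_eq_zero
      intro l' _
      rw [hAY _ _ (castY_ge l) (castY_ge l'), zero_mul]
    rw [h2, add_zero] at h1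
    have h3 : ∀ k : Fin n, A (castY n l) (castX n k) = M k l := by
      intro k
      have hMe : M k l = A (castX n k) (castY n l) := rfl
      rw [hMe, hAapp, hAapp]
      by_cases hadj : G.Adj (castX n k) (castY n l)
      · rw [if_pos hadj.symm, if_pos hadj]
      · rw [if_neg (fun hh => hadj hh.symm), if_neg hadj]
    simp only [h3] at h1
    simpa [Matrix.mulVec, dotProduct, Matrix.transpose_apply] using h1
  have htr : μ^2 ≤ ∑ k, ∑ l, (M k l)^2 := by
    have hpq : p ≠ 0 ∨ q ≠ 0 := by
      by_contra hcon
      push_neg at hcon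
      apply hv0
      funext z
      obtain ⟨s, rfl⟩ := (e2 n).surjective z
      cases s with
      | inl k => rw [e2_inl]; exact congrFun hcon.1 k
      | inr l => rw [e2_inr]; exact congrFun hcon.2 l
    rcases hpq with hp0 | hq0
    · apply gram_eig_le_trace M p hp0 (μ^2)
      rw [← Matrix.mulVec_mulVec, hMp, Matrix.mulVec_smul, hMq, smul_smul, sq]
    · have h := gram_eig_le_trace Mᵀ q hq0 (μ^2) ?_
      · calc μ^2 ≤ ∑ l, ∑ k, (Mᵀ l k)^2 := h
          _ = ∑ k, ∑ l, (M k l)^2 := by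
            rw [Finset.sum_comm]
            simp [Matrix.transpose_apply]
      · rw [Matrix.transpose_transpose, ← Matrix.mulVec_mulVec, hMq, Matrix.mulVec_smul,
          hMp, smul_smul, sq]
  have hsum : (∑ k, ∑ l, (M k l)^2) =
      ((univ.filter fun c : Fin n × Fin n => G.Adj (castX n c.1) (castY n c.2)).card : ℝ) := by
    calc ∑ k, ∑ l, (M k l)^2
        = ∑ c : Fin n × Fin n, (if G.Adj (castX n c.1) (castY n c.2) then (1:ℝ) else 0) := by
          rw [Fintype.sum_prod_type]
          refine Finset.sum_congr rfl fun k _ => Finset.sum_congr rfl fun l _ => ?_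
          have hMe : M k l = A (castX n k) (castY n l) := rfl
          rw [hMe, hAapp]
          split_ifs <;> norm_num
      _ = _ := by rw [Finset.sum_boole]
  calc (n:ℝ)*((n:ℝ)-1) ≤ μ^2 := hμsq
    _ ≤ _ := le_of_le_of_eq htr hsum

end Spectral


open Finset Equiv

variable {n : ℕ}

section Counting

lemma fiber_card (hn : 0 < n) (k l : Fin n) :
    (univ.filter fun σ : Perm (Fin n) => σ k = l).card = Nat.factorial (n-1) := by
  have hcongr : ∀ l' : Fin n, (univ.filter fun σ : Perm (Fin n) => σ k = l').card =
      (univ.filter fun σ : Perm (Fin n) => σ k = l).card := by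
    intro l'
    apply Finset.card_bij' (fun σ _ => Equiv.swap l' l * σ) (fun σ _ => Equiv.swap l' l * σ)
    · intro σ hσ
      simp only [mem_filter, mem_univ, true_and] at hσ ⊢
      rw [Equiv.Perm.mul_apply, hσ, Equiv.swap_apply_left]
    · intro σ hσ
      simp only [mem_filter, mem_univ, true_and] at hσ ⊢
      rw [Equiv.Perm.mul_apply, hσ, Equiv.swap_apply_right]
    · intro σ _; rw [← mul_assoc, Equiv.swap_mul_self, one_mul]
    · intro σ _; rw [← mul_assoc, Equiv.swap_mul_self, one_mul]
  have hsum : ∑ l' : Fin n, (univ.filter fun σ : Perm (Fin n) => σ k = l').card =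
      (univ : Finset (Perm (Fin n))).card :=
    (Finset.card_eq_sum_card_fiberwise fun σ _ => mem_univ (σ k)).symm
  rw [Finset.sum_congr rfl fun l' _ => hcongr l'] at hsum
  simp only [Finset.sum_const, Finset.card_univ, Fintype.card_fin, Fintype.card_perm,
    smul_eq_mul] at hsum

  have hfact : Nat.factorial n = n * Nat.factorial (n-1) := (Nat.mul_factorial_pred hn.ne').symm
  exact Nat.eq_of_mul_eq_mul_left hn (hsum.trans hfact)

lemma sum_perm_comp (hn : 0 < n) (k : Fin n) (g : Fin n → ℕ) :
    ∑ σ : Perm (Fin n), g (σ k) = Nat.factorial (n-1) * ∑ l, g l := by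
  calc ∑ σ : Perm (Fin n), g (σ k)
      = ∑ l : Fin n, ∑ σ ∈ (univ.filter fun σ : Perm (Fin n) => σ k = l), g (σ k) :=
        (Finset.sum_fiberwise_of_maps_to (fun σ _ => mem_univ (σ k)) _).symm
    _ = ∑ l : Fin n, Nat.factorial (n-1) * g l := by
        refine Finset.sum_congr rfl fun l _ => ?_
        have hco : ∀ σ ∈ univ.filter fun σ : Perm (Fin n) => σ k = l, g (σ k) = g l :=
          fun σ hσ => by rw [(Finset.mem_filter.mp hσ).2]
        rw [Finset.sum_congr rfl hco, Finset.sum_const, fiber_card hn, smul_eq_mul]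
    _ = Nat.factorial (n-1) * ∑ l, g l := by rw [Finset.mul_sum]

lemma total_bad_count (hn : 0 < n) (D : Fin n → Finset (Fin n × Fin n)) :
    ∑ p : Perm (Fin n) × Perm (Fin n),
        (univ.filter fun k => (k, p.1 k) ∈ D (p.2 k)).card
      = (∑ i, (D i).card) * (Nat.factorial (n-1))^2 := by
  have step1 : ∀ p : Perm (Fin n) × Perm (Fin n),
      (univ.filter fun k => (k, p.1 k) ∈ D (p.2 k)).card
        = ∑ k : Fin n, if (k, p.1 k) ∈ D (p.2 k) then 1 else 0 := by
    intro p; rw [Finset.sum_boole, Nat.cast_id]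
  calc ∑ p : Perm (Fin n) × Perm (Fin n),
        (univ.filter fun k => (k, p.1 k) ∈ D (p.2 k)).card
      = ∑ p : Perm (Fin n) × Perm (Fin n), ∑ k : Fin n,
          if (k, p.1 k) ∈ D (p.2 k) then 1 else 0 := Finset.sum_congr rfl fun p _ => step1 p
    _ = ∑ k : Fin n, ∑ p : Perm (Fin n) × Perm (Fin n),
          if (k, p.1 k) ∈ D (p.2 k) then 1 else 0 := Finset.sum_comm
    _ = ∑ k : Fin n, ∑ σ : Perm (Fin n), ∑ τ : Perm (Fin n),
          if (k, σ k) ∈ D (τ k) then 1 else 0 := by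
        refine Finset.sum_congr rfl fun k _ => ?_
        exact Fintype.sum_prod_type (f := fun p : Perm (Fin n) × Perm (Fin n) =>
          if (k, p.1 k) ∈ D (p.2 k) then 1 else 0)
    _ = ∑ k : Fin n, ∑ σ : Perm (Fin n), Nat.factorial (n-1) * ∑ i : Fin n,
          (if (k, σ k) ∈ D i then 1 else 0) := by
        refine Finset.sum_congr rfl fun k _ => Finset.sum_congr rfl fun σ _ => ?_
        exact sum_perm_comp hn k fun i => if (k, σ k) ∈ D i then 1 else 0
    _ = ∑ k : Fin n, Nat.factorial (n-1) * (Nat.factorial (n-1) * ∑ l : Fin n, ∑ i : Fin n,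
          (if (k, l) ∈ D i then 1 else 0)) := by
        refine Finset.sum_congr rfl fun k _ => ?_
        rw [← Finset.mul_sum]
        congr 1
        exact sum_perm_comp hn k fun l => ∑ i : Fin n, if (k, l) ∈ D i then 1 else 0
    _ = (Nat.factorial (n-1))^2 * ∑ k : Fin n, ∑ l : Fin n, ∑ i : Fin n,
          (if (k, l) ∈ D i then 1 else 0) := by
        rw [Finset.mul_sum]
        exact Finset.sum_congr rfl fun k _ => by ring
    _ = (Nat.factorial (n-1))^2 * ∑ i, (D i).card := by
        congr 1
        calc ∑ k : Fin n, ∑ l : Fin n, ∑ i : Fin n, (if (k, l) ∈ D i then 1 else 0)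
            = ∑ k : Fin n, ∑ i : Fin n, ∑ l : Fin n, (if (k, l) ∈ D i then 1 else 0) :=
              Finset.sum_congr rfl fun k _ => Finset.sum_comm
          _ = ∑ i : Fin n, ∑ k : Fin n, ∑ l : Fin n, (if (k, l) ∈ D i then 1 else 0) :=
              Finset.sum_comm
          _ = ∑ i, (D i).card := by
              refine Finset.sum_congr rfl fun i _ => ?_
              rw [(Fintype.sum_prod_type (f := fun c : Fin n × Fin n =>
                if c ∈ D i then 1 else 0)).symm]
              rw [Finset.sum_boole, Nat.cast_id, Finset.filter_mem_eq_inter,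
                Finset.univ_inter]
    _ = (∑ i, (D i).card) * (Nat.factorial (n-1))^2 := mul_comm _ _

lemma exists_good_of_lt (hn : 0 < n) (D : Fin n → Finset (Fin n × Fin n))
    (h : ∑ i, (D i).card < n^2) :
    ∃ σ τ : Perm (Fin n), ∀ k, (k, σ k) ∉ D (τ k) := by
  by_contra hcon
  push_neg at hcon
  have hge : ∀ p : Perm (Fin n) × Perm (Fin n),
      1 ≤ (univ.filter fun k => (k, p.1 k) ∈ D (p.2 k)).card := by
    intro p
    obtain ⟨k, hk⟩ := hcon p.1 p.2
    exact Finset.card_pos.mpr ⟨k, Finset.mem_filter.mpr ⟨mem_univ k, hk⟩⟩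
  have h1 : Fintype.card (Perm (Fin n) × Perm (Fin n)) ≤
      ∑ p : Perm (Fin n) × Perm (Fin n),
        (univ.filter fun k => (k, p.1 k) ∈ D (p.2 k)).card := by
    rw [← Finset.card_univ, Finset.card_eq_sum_ones]
    exact Finset.sum_le_sum fun p _ => hge p
  rw [total_bad_count hn D] at h1
  have hcard : Fintype.card (Perm (Fin n) × Perm (Fin n)) = n^2 * (Nat.factorial (n-1))^2 := by
    rw [Fintype.card_prod, Fintype.card_perm, Fintype.card_fin]
    have : Nat.factorial n = n * Nat.factorial (n-1) := (Nat.mul_factorial_pred hn.ne').symm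
    rw [this]; ring
  rw [hcard] at h1
  have hfp : 0 < (Nat.factorial (n-1))^2 := by positivity
  have h2 : (∑ i, (D i).card) * (Nat.factorial (n-1))^2 + (Nat.factorial (n-1))^2
      ≤ n^2 * (Nat.factorial (n-1))^2 := by
    have h3 := mul_le_mul_left (Nat.succ_le_of_lt h) ((Nat.factorial (n-1))^2)
    calc _ = (∑ i, (D i).card + 1) * (Nat.factorial (n-1))^2 := by ring
      _ ≤ _ := h3
  linarith

lemma exists_perm_two {α : Type*} [DecidableEq α] {a a' b b' : α}
    (ha : a ≠ a') (hb : b ≠ b') : ∃ π : Perm α, π a = b ∧ π a' = b' := by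
  set c := Equiv.swap a b a' with hc
  have hcb : c ≠ b := by
    rw [hc, Equiv.swap_apply_def]
    split_ifs with h1 h2
    · exact (ha h1.symm).elim
    · exact fun h => ha (h.trans h2.symm)
    · exact h2
  refine ⟨Equiv.swap c b' * Equiv.swap a b, ?_, ?_⟩
  · rw [Equiv.Perm.mul_apply, Equiv.swap_apply_left, Equiv.swap_apply_of_ne_of_ne hcb.symm hb]
  · rw [Equiv.Perm.mul_apply, ← hc, Equiv.swap_apply_left]

lemma exists_good_of_two (hn : 0 < n) (D : Fin n → Finset (Fin n × Fin n))
    (h : ∑ i, (D i).card ≤ n^2)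
    {i j k l k' l' : Fin n} (hij : i ≠ j) (hk : k ≠ k') (hl : l ≠ l')
    (h1 : (k, l) ∈ D i) (h2 : (k', l') ∈ D j) :
    ∃ σ τ : Perm (Fin n), ∀ m, (m, σ m) ∉ D (τ m) := by
  by_contra hcon
  push_neg at hcon
  have hge : ∀ p : Perm (Fin n) × Perm (Fin n),
      1 ≤ (univ.filter fun m => (m, p.1 m) ∈ D (p.2 m)).card := by
    intro p
    obtain ⟨m, hm⟩ := hcon p.1 p.2
    exact Finset.card_pos.mpr ⟨m, Finset.mem_filter.mpr ⟨mem_univ m, hm⟩⟩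
  obtain ⟨σ₀, hσ1, hσ2⟩ := exists_perm_two hk hl
  obtain ⟨τ₀, hτ1, hτ2⟩ := exists_perm_two hk hij
  set p₀ : Perm (Fin n) × Perm (Fin n) := (σ₀, τ₀) with hp₀
  have h2le : 2 ≤ (univ.filter fun m => (m, p₀.1 m) ∈ D (p₀.2 m)).card := by
    have hsub : ({k, k'} : Finset (Fin n)) ⊆
        univ.filter fun m => (m, p₀.1 m) ∈ D (p₀.2 m) := by
      intro m hm
      rcases Finset.mem_insert.mp hm with rfl | hm
      · exact Finset.mem_filter.mpr ⟨mem_univ _, by rw [hp₀]; simpa [hσ1, hτ1] using h1⟩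
      · rw [Finset.mem_singleton.mp hm]
        exact Finset.mem_filter.mpr ⟨mem_univ _, by rw [hp₀]; simpa [hσ2, hτ2] using h2⟩
    calc 2 = ({k, k'} : Finset (Fin n)).card := (Finset.card_pair hk).symm
      _ ≤ _ := Finset.card_le_card hsub
  have hsumge : Fintype.card (Perm (Fin n) × Perm (Fin n)) + 1 ≤
      ∑ p : Perm (Fin n) × Perm (Fin n),
        (univ.filter fun m => (m, p.1 m) ∈ D (p.2 m)).card := by
    rw [← Finset.sum_erase_add _ _ (mem_univ p₀)]
    have hle1 : (univ.erase p₀).card ≤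
        ∑ p ∈ univ.erase p₀, (univ.filter fun m => (m, p.1 m) ∈ D (p.2 m)).card := by
      rw [Finset.card_eq_sum_ones]
      exact Finset.sum_le_sum fun p _ => hge p
    have hce : (univ.erase p₀).card = Fintype.card (Perm (Fin n) × Perm (Fin n)) - 1 := by
      rw [Finset.card_erase_of_mem (mem_univ p₀), Finset.card_univ]
    have hpos : 0 < Fintype.card (Perm (Fin n) × Perm (Fin n)) := Fintype.card_pos
    omega
  rw [total_bad_count hn D] at hsumge
  have hcard : Fintype.card (Perm (Fin n) × Perm (Fin n)) = n^2 * (Nat.factorial (n-1))^2 := by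
    rw [Fintype.card_prod, Fintype.card_perm, Fintype.card_fin]
    have : Nat.factorial n = n * Nat.factorial (n-1) := (Nat.mul_factorial_pred hn.ne').symm
    rw [this]; ring
  rw [hcard] at hsumge
  have hfp : 0 < (Nat.factorial (n-1))^2 := by positivity
  have h3 := mul_le_mul_left h ((Nat.factorial (n-1))^2)
  linarith

end Counting


open SimpleGraph Finset Equiv


variable {n : ℕ}

lemma castX_ne_castY (k l : Fin n) : castX n k ≠ castY n l := by
  intro h
  have := congrArg Fin.val h
  simp [castX, castY] at this
  omega

lemma castX_inj {k k' : Fin n} (h : castX n k = castX n k') : k = k' := by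
  apply Fin.ext
  have := congrArg Fin.val h
  simpa [castX] using this

lemma castY_inj {l l' : Fin n} (h : castY n l = castY n l') : l = l' := by
  apply Fin.ext
  have := congrArg Fin.val h
  simp [castY] at this
  omega

def matchG (n : ℕ) (σ : Perm (Fin n)) : SimpleGraph (Fin (2*n)) where
  Adj u v := ∃ k : Fin n, (u = castX n k ∧ v = castY n (σ k)) ∨
    (v = castX n k ∧ u = castY n (σ k))
  symm := by
    refine ⟨?_⟩
    rintro u v ⟨k, ⟨h1, h2⟩ | ⟨h1, h2⟩⟩
    · exact ⟨k, Or.inr ⟨h1, h2⟩⟩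
    · exact ⟨k, Or.inl ⟨h1, h2⟩⟩
  loopless := by
    refine ⟨?_⟩
    rintro u ⟨k, ⟨h1, h2⟩ | ⟨h1, h2⟩⟩ <;> exact castX_ne_castY k (σ k) (h1.symm.trans h2)

lemma rainbow_of_perm (𝒢 : Fin n → SimpleGraph (Fin (2*n))) (σ τ : Perm (Fin n))
    (hgood : ∀ k, (𝒢 (τ k)).Adj (castX n k) (castY n (σ k))) :
    ∃ H, IsRainbowFactor 𝒢 1 H := by
  refine ⟨matchG n σ, ?_, ?_⟩
  · intro v
    by_cases hv : v.val < n
    · have hveq : v = castX n ⟨v.val, hv⟩ := Fin.ext rfl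
      have : (matchG n σ).neighborSet v = {castY n (σ ⟨v.val, hv⟩)} := by
        ext w
        simp only [mem_neighborSet, Set.mem_singleton_iff]
        constructor
        · rintro ⟨k, ⟨h1, h2⟩ | ⟨h1, h2⟩⟩
          · have hkk : k = ⟨v.val, hv⟩ := castX_inj (h1.symm.trans hveq)
            rw [h2, hkk]
          · exact ((castX_ne_castY _ _) (hveq.symm.trans h2)).elim
        · rintro rfl
          exact ⟨⟨v.val, hv⟩, Or.inl ⟨hveq, rfl⟩⟩
      rw [this, Set.ncard_singleton]
    · push_neg at hv
      have hvn : v.val - n < n := by omega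
      have hveq : v = castY n ⟨v.val - n, hvn⟩ := Fin.ext (by simp [castY]; omega)
      have : (matchG n σ).neighborSet v = {castX n (σ.symm ⟨v.val - n, hvn⟩)} := by
        ext w
        simp only [mem_neighborSet, Set.mem_singleton_iff]
        constructor
        · rintro ⟨k, ⟨h1, h2⟩ | ⟨h1, h2⟩⟩
          · have h3 : v.val < n := by rw [h1]; exact k.isLt
            omega
          · rw [h1]
            congr 1
            have hσ : σ k = ⟨v.val - n, hvn⟩ := castY_inj (h2.symm.trans hveq)
            rw [← hσ, Equiv.symm_apply_apply]
        · rintro rfl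
          exact ⟨σ.symm ⟨v.val - n, hvn⟩, Or.inr ⟨rfl, by rw [Equiv.apply_symm_apply, ← hveq]⟩⟩
      rw [this, Set.ncard_singleton]
  · have hmem : ∀ k : Fin n, s(castX n k, castY n (σ k)) ∈ (matchG n σ).edgeSet := by
      intro k
      rw [SimpleGraph.mem_edgeSet]
      exact ⟨k, Or.inl ⟨rfl, rfl⟩⟩
    set ψ : Fin n → (matchG n σ).edgeSet := fun k => ⟨s(castX n k, castY n (σ k)), hmem k⟩
      with hψ
    have hbij : Function.Bijective ψ := by
      constructor
      · intro k k' h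
        have h2 : s(castX n k, castY n (σ k)) = s(castX n k', castY n (σ k')) :=
          congrArg Subtype.val h
        rw [Sym2.eq_iff] at h2
        rcases h2 with ⟨h3, _⟩ | ⟨h3, _⟩
        · exact castX_inj h3
        · exact absurd h3 (castX_ne_castY _ _)
      · rintro ⟨e, he⟩
        induction e using Sym2.inductionOn with
        | hf u v =>
          rw [SimpleGraph.mem_edgeSet] at he
          obtain ⟨k, ⟨h1, h2⟩ | ⟨h1, h2⟩⟩ := he
          · exact ⟨k, Subtype.ext (by rw [hψ]; simp [h1, h2])⟩
          · exact ⟨k, Subtype.ext (by rw [hψ]; simp only []; rw [h1, h2]; exact Sym2.eq_swap)⟩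
    refine ⟨(Equiv.ofBijective ψ hbij).symm.trans τ, ?_⟩
    intro e
    set k := (Equiv.ofBijective ψ hbij).symm e with hk
    have hψk : ψ k = e := by rw [hk]; exact (Equiv.ofBijective ψ hbij).apply_symm_apply e
    have hφ : ((Equiv.ofBijective ψ hbij).symm.trans τ) e = τ k := rfl
    rw [hφ]
    have : (e : Sym2 (Fin (2*n))) = s(castX n k, castY n (σ k)) :=
      (congrArg Subtype.val hψk).symm
    rw [this, SimpleGraph.mem_edgeSet]
    exact hgood k


open Finset

variable {n : ℕ}

lemma crossint_star {S T : Finset (Fin n × Fin n)}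
    (hcross : ∀ a ∈ S, ∀ b ∈ T, a.1 = b.1 ∨ a.2 = b.2) (hS : 3 ≤ S.card) :
    (∀ b ∈ T, ∀ b' ∈ T, b.1 = b'.1) ∨ (∀ b ∈ T, ∀ b' ∈ T, b.2 = b'.2) := by
  by_contra hcon
  push_neg at hcon
  obtain ⟨⟨b1, hb1, b2, hb2, hrow⟩, b3, hb3, b4, hb4, hcol⟩ := hcon
  obtain ⟨a, ha⟩ := Finset.card_pos.mp (lt_of_lt_of_le (by norm_num) hS)
  -- every b in T has b.1 = a.1 or b.2 = a.2
  have hT : ∀ b ∈ T, b.1 = a.1 ∨ b.2 = a.2 := fun b hb =>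
    (hcross a ha b hb).imp Eq.symm Eq.symm
  -- not all rows equal a.1
  have hex1 : ∃ b ∈ T, b.1 ≠ a.1 := by
    by_contra h
    push_neg at h
    exact hrow ((h b1 hb1).trans (h b2 hb2).symm)
  have hex2 : ∃ b ∈ T, b.2 ≠ a.2 := by
    by_contra h
    push_neg at h
    exact hcol ((h b3 hb3).trans (h b4 hb4).symm)
  obtain ⟨p, hp, hp1⟩ := hex1
  obtain ⟨r, hr, hr2⟩ := hex2
  have hpa : p.2 = a.2 := (hT p hp).resolve_left hp1
  have hra : r.1 = a.1 := (hT r hr).resolve_right hr2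
  -- every a' ∈ S meets p = (p.1, a.2) and r = (a.1, r.2)
  have hsub : S ⊆ {(p.1, r.2), a} := by
    intro x hx
    have h1 := hcross x hx p hp
    have h2 := hcross x hx r hr
    rw [hpa] at h1
    rw [hra] at h2
    simp only [Finset.mem_insert, Finset.mem_singleton]
    rcases h1 with h1 | h1 <;> rcases h2 with h2 | h2
    · exact absurd (h1.symm.trans h2) hp1
    · left; exact Prod.ext h1 h2
    · right; exact Prod.ext h2 h1
    · exact absurd (h2.symm.trans h1) hr2
  have hc := Finset.card_le_card hsub
  have h2 : ({(p.1, r.2), a} : Finset (Fin n × Fin n)).card ≤ 2 := by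
    apply le_trans (Finset.card_insert_le _ _)
    simp
  omega

def RowStar (n : ℕ) (r : Fin n) : Finset (Fin n × Fin n) := univ.filter fun c => c.1 = r
def ColStar (n : ℕ) (c : Fin n) : Finset (Fin n × Fin n) := univ.filter fun x => x.2 = c

lemma rowStar_card (r : Fin n) : (RowStar n r).card = n := by
  rw [RowStar]
  rw [show (univ.filter fun c : Fin n × Fin n => c.1 = r) = {r} ×ˢ univ by
    ext c
    simp only [Finset.mem_filter, Finset.mem_univ, true_and, Finset.mem_product,
      Finset.mem_singleton, and_true]]
  simp

lemma colStar_card (c : Fin n) : (ColStar n c).card = n := by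
  rw [ColStar]
  rw [show (univ.filter fun x : Fin n × Fin n => x.2 = c) = univ ×ˢ {c} by
    ext x
    simp only [Finset.mem_filter, Finset.mem_univ, true_and, Finset.mem_product,
      Finset.mem_singleton, and_true]]
  simp

lemma mem_rowStar {r : Fin n} {x : Fin n × Fin n} : x ∈ RowStar n r ↔ x.1 = r := by
  simp [RowStar]

lemma mem_colStar {c : Fin n} {x : Fin n × Fin n} : x ∈ ColStar n c ↔ x.2 = c := by
  simp [ColStar]

lemma exists_ne_fin (hn : 2 ≤ n) (x : Fin n) : ∃ y : Fin n, y ≠ x := by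
  refine ⟨⟨if x.val = 0 then 1 else 0, by split_ifs <;> omega⟩, ?_⟩
  intro h
  have h2 := congrArg Fin.val h
  simp only [] at h2
  split_ifs at h2 <;> omega


open SimpleGraph Finset

open scoped Classical in
lemma specRad_le_one {m : ℕ} (G : SimpleGraph (Fin m))
    (hone : ∀ u, ∃ z, G.Adj u z ∧ ∀ z', G.Adj u z' → z' = z) : specRad G ≤ 1 := by
  set A := (@SimpleGraph.adjMatrix ℝ (Fin m) G (Classical.decRel _) _ _) with hA
  have hAapp : ∀ z z', A z z' = if G.Adj z z' then 1 else 0 := fun z z' => by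
    rw [hA, SimpleGraph.adjMatrix_apply]
  have hAA : A * A = 1 := by
    ext u w
    rw [Matrix.mul_apply]
    obtain ⟨z₀, hz, huniq⟩ := hone u
    rw [Finset.sum_eq_single z₀ (fun z _ hzne => by
      rw [hAapp u z, if_neg (fun hadj => hzne (huniq z hadj)), zero_mul])
      (fun habs => absurd (mem_univ z₀) habs)]
    rw [hAapp, if_pos hz, one_mul, hAapp, Matrix.one_apply]
    obtain ⟨z₁, hz1, huniq1⟩ := hone z₀
    have hu1 : u = z₁ := huniq1 u hz.symm
    have hiff : G.Adj z₀ w ↔ u = w := by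
      constructor
      · intro h; rw [hu1, (huniq1 w h)]
      · rintro rfl; exact hz.symm
    split_ifs with h1 h2 h2
    · rfl
    · exact absurd (hiff.mp h1) h2
    · exact absurd (hiff.mpr h2) h1
    · rfl
  have hbound : ∀ x ∈ {x : ℝ | Module.End.HasEigenvalue (Matrix.toLin' A) x}, x ≤ 1 := by
    intro x hx
    obtain ⟨v, hvec⟩ := Module.End.HasEigenvalue.exists_hasEigenvector hx
    have hv0 : v ≠ 0 := hvec.right
    have hv : A.mulVec v = x • v := by
      have := hvec.apply_eq_smul
      rwa [Matrix.toLin'_apply] at this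
    have h2 : v = (x*x) • v := by
      have : (A*A).mulVec v = (x*x) • v := by
        rw [← Matrix.mulVec_mulVec, hv, Matrix.mulVec_smul, hv, smul_smul]
      rwa [hAA, Matrix.one_mulVec] at this
    obtain ⟨k, hk⟩ := Function.ne_iff.mp hv0
    have hk' : v k ≠ 0 := by simpa using hk
    have h3 : v k = (x*x) * v k := by
      have := congrFun h2 k
      simpa using this
    have h4 : x * x = 1 := by
      have h5 : (x*x - 1) * v k = 0 := by linarith [h3]
      rcases mul_eq_zero.mp h5 with h6 | h6
      · linarith
      · exact absurd h6 hk'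
    nlinarith
  exact Real.sSup_le hbound zero_le_one


open SimpleGraph Finset

lemma bipG_adj {n : ℕ} (u v : Fin (2*n)) : (bipG n 0 1).Adj u v ↔
    ((u.val < n ∧ n ≤ v.val ∧ v.val < 2*n - 1) ∨ (v.val < n ∧ n ≤ u.val ∧ u.val < 2*n - 1)) := by
  show ((u.val < n ∧ n ≤ v.val ∧ (u.val < 0 ∨ v.val < 2*n - 1)) ∨
    (v.val < n ∧ n ≤ u.val ∧ (v.val < 0 ∨ u.val < 2*n - 1))) ↔ _
  omega

section Bad
open scoped Classical

variable {n : ℕ}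

noncomputable def badSet (n : ℕ) (G : SimpleGraph (Fin (2*n))) : Finset (Fin n × Fin n) :=
  univ.filter fun c => ¬ G.Adj (castX n c.1) (castY n c.2)

lemma not_mem_badSet_iff {G : SimpleGraph (Fin (2*n))} {c : Fin n × Fin n} :
    c ∉ badSet n G ↔ G.Adj (castX n c.1) (castY n c.2) := by
  simp [badSet]

lemma adj_iff_cell (G : SimpleGraph (Fin (2*n))) {u v : Fin (2*n)}
    (hu : u.val < n) (hv : n ≤ v.val) :
    G.Adj u v ↔ ((⟨u.val, hu⟩ : Fin n), (⟨v.val - n, by omega⟩ : Fin n)) ∉ badSet n G := by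
  rw [not_mem_badSet_iff]
  have h1 : castX n ⟨u.val, hu⟩ = u := Fin.ext rfl
  have h2 : castY n (⟨v.val - n, by omega⟩ : Fin n) = v := Fin.ext (by simp [castY]; omega)
  rw [h1, h2]

lemma graph_eq_of_badSet_eq {G G' : SimpleGraph (Fin (2*n))}
    (hbip : ∀ u v, G.Adj u v → (u.val < n ∧ n ≤ v.val) ∨ (v.val < n ∧ n ≤ u.val))
    (hbip' : ∀ u v, G'.Adj u v → (u.val < n ∧ n ≤ v.val) ∨ (v.val < n ∧ n ≤ u.val))
    (h : badSet n G = badSet n G') : G = G' := by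
  have key : ∀ (H H' : SimpleGraph (Fin (2*n))),
      (∀ u v, H.Adj u v → (u.val < n ∧ n ≤ v.val) ∨ (v.val < n ∧ n ≤ u.val)) →
      badSet n H = badSet n H' → ∀ u v, H.Adj u v → H'.Adj u v := by
    intro H H' hb he u v huv
    rcases hb u v huv with ⟨hu, hv⟩ | ⟨hv, hu⟩
    · rw [adj_iff_cell H hu hv, he] at huv
      exact (adj_iff_cell H' hu hv).mpr huv
    · have huv' := huv.symm
      rw [adj_iff_cell H hv hu, he] at huv'
      exact ((adj_iff_cell H' hv hu).mpr huv').symm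
  ext u v
  exact ⟨key G G' hbip h u v, key G' G hbip' h.symm u v⟩

lemma adj_iff_col {G : SimpleGraph (Fin (2*n))}
    (hbip : ∀ u v, G.Adj u v → (u.val < n ∧ n ≤ v.val) ∨ (v.val < n ∧ n ≤ u.val))
    {c : Fin n} (hD : badSet n G = ColStar n c) (u v : Fin (2*n)) :
    G.Adj u v ↔ ((u.val < n ∧ n ≤ v.val ∧ v.val ≠ n + c.val) ∨
      (v.val < n ∧ n ≤ u.val ∧ u.val ≠ n + c.val)) := by
  have key : ∀ u v : Fin (2*n), u.val < n → n ≤ v.val →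
      (G.Adj u v ↔ v.val ≠ n + c.val) := by
    intro u v hu hv
    rw [adj_iff_cell G hu hv, hD]
    constructor
    · intro hmem hval
      apply hmem
      rw [mem_colStar]
      apply Fin.ext
      simp only []
      omega
    · intro hval hmem
      rw [mem_colStar] at hmem
      have := congrArg Fin.val hmem
      simp only [] at this
      omega
  constructor
  · intro huv
    rcases hbip u v huv with ⟨hu, hv⟩ | ⟨hv, hu⟩
    · exact Or.inl ⟨hu, hv, (key u v hu hv).mp huv⟩
    · exact Or.inr ⟨hv, hu, (key v u hv hu).mp huv.symm⟩
  · rintro (⟨hu, hv, hne⟩ | ⟨hv, hu, hne⟩)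
    · exact (key u v hu hv).mpr hne
    · exact ((key v u hv hu).mpr hne).symm

lemma adj_iff_row {G : SimpleGraph (Fin (2*n))}
    (hbip : ∀ u v, G.Adj u v → (u.val < n ∧ n ≤ v.val) ∨ (v.val < n ∧ n ≤ u.val))
    {r : Fin n} (hD : badSet n G = RowStar n r) (u v : Fin (2*n)) :
    G.Adj u v ↔ ((u.val < n ∧ n ≤ v.val ∧ u.val ≠ r.val) ∨
      (v.val < n ∧ n ≤ u.val ∧ v.val ≠ r.val)) := by
  have key : ∀ u v : Fin (2*n), u.val < n → n ≤ v.val →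
      (G.Adj u v ↔ u.val ≠ r.val) := by
    intro u v hu hv
    rw [adj_iff_cell G hu hv, hD]
    constructor
    · intro hmem hval
      apply hmem
      rw [mem_rowStar]
      exact Fin.ext hval
    · intro hval hmem
      rw [mem_rowStar] at hmem
      exact hval (congrArg Fin.val hmem)
  constructor
  · intro huv
    rcases hbip u v huv with ⟨hu, hv⟩ | ⟨hv, hu⟩
    · exact Or.inl ⟨hu, hv, (key u v hu hv).mp huv⟩
    · exact Or.inr ⟨hv, hu, (key v u hv hu).mp huv.symm⟩
  · rintro (⟨hu, hv, hne⟩ | ⟨hv, hu, hne⟩)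
    · exact (key u v hu hv).mpr hne
    · exact ((key v u hv hu).mpr hne).symm

lemma iso_col (hn : 1 ≤ n) (G : SimpleGraph (Fin (2*n)))
    (hbip : ∀ u v, G.Adj u v → (u.val < n ∧ n ≤ v.val) ∨ (v.val < n ∧ n ≤ u.val))
    (c : Fin n) (hD : badSet n G = ColStar n c) : Nonempty (G ≃g bipG n 0 1) := by
  have hc := c.isLt
  set t : Fin (2*n) := ⟨2*n - 1, by omega⟩ with ht
  set yc : Fin (2*n) := castY n c with hyc
  set e := Equiv.swap yc t with he
  have hval : ∀ u : Fin (2*n), (e u).val =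
      if u.val = n + c.val then 2*n - 1 else if u.val = 2*n - 1 then n + c.val else u.val := by
    intro u
    have h4 : yc.val = n + c.val := rfl
    have h5 : t.val = 2*n - 1 := rfl
    by_cases h1 : u = yc
    · subst h1
      rw [he, Equiv.swap_apply_left]
      split_ifs <;> omega
    · by_cases h2 : u = t
      · subst h2
        rw [he, Equiv.swap_apply_right]
        split_ifs <;> omega
      · rw [he, Equiv.swap_apply_of_ne_of_ne h1 h2]
        have h6 : u.val ≠ n + c.val := fun hh => h1 (Fin.ext hh)
        have h7 : u.val ≠ 2*n - 1 := fun hh => h2 (Fin.ext hh)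
        rw [if_neg h6, if_neg h7]
  refine ⟨⟨e, ?_⟩⟩
  intro u v
  rw [bipG_adj, adj_iff_col hbip hD]
  have h1 := hval u
  have h2 := hval v
  have hu2 := u.isLt
  have hv2 := v.isLt
  split_ifs at h1 h2 <;> omega

def sfun (n r w : ℕ) : ℕ := if w = r then n - 1 else if w = n - 1 then r else w

lemma sfun_lt {n r w : ℕ} (hr : r < n) (hw : w < n) : sfun n r w < n := by
  rw [sfun]; split_ifs <;> omega

lemma sfun_invol {n r w : ℕ} (hr : r < n) (hw : w < n) : sfun n r (sfun n r w) = w := by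
  rw [sfun, sfun]; split_ifs <;> omega

noncomputable def rowFun (n : ℕ) (r : Fin n) (u : Fin (2*n)) : Fin (2*n) :=
  if h : u.val < n then ⟨n + sfun n r.val u.val, by have := sfun_lt r.isLt h; omega⟩
  else ⟨u.val - n, by omega⟩

lemma rowFun_val (n : ℕ) (r : Fin n) (u : Fin (2*n)) :
    (rowFun n r u).val = if u.val < n then n + sfun n r.val u.val else u.val - n := by
  rw [rowFun]
  by_cases h : u.val < n
  · rw [dif_pos h, if_pos h]
  · rw [dif_neg h, if_neg h]

noncomputable def rowEquiv (n : ℕ) (r : Fin n) : Fin (2*n) ≃ Fin (2*n) :=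
  Equiv.ofBijective (rowFun n r) (by
    rw [← Finite.injective_iff_bijective]
    intro u u' huu
    have h1 := rowFun_val n r u
    have h2 := rowFun_val n r u'
    rw [huu] at h1
    have hveq : (if u.val < n then n + sfun n r.val u.val else u.val - n)
        = (if u'.val < n then n + sfun n r.val u'.val else u'.val - n) := by
      rw [← h1, ← h2]
    have hu := u.isLt
    have hu' := u'.isLt
    apply Fin.ext
    by_cases hc1 : u.val < n <;> by_cases hc2 : u'.val < n
    · rw [if_pos hc1, if_pos hc2] at hveq
      have h3 : sfun n r.val u.val = sfun n r.val u'.val := by omega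
      have h4 := sfun_invol r.isLt hc1
      have h5 := sfun_invol r.isLt hc2
      rw [← h4, ← h5, h3]
    · rw [if_pos hc1, if_neg hc2] at hveq
      have h3 := sfun_lt r.isLt hc1
      omega
    · rw [if_neg hc1, if_pos hc2] at hveq
      have h3 := sfun_lt r.isLt hc2
      omega
    · rw [if_neg hc1, if_neg hc2] at hveq
      omega)

lemma rowEquiv_val (n : ℕ) (r : Fin n) (u : Fin (2*n)) :
    ((rowEquiv n r) u).val = if u.val < n then n + sfun n r.val u.val else u.val - n :=
  rowFun_val n r u


lemma iso_row (hn : 1 ≤ n) (G : SimpleGraph (Fin (2*n)))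
    (hbip : ∀ u v, G.Adj u v → (u.val < n ∧ n ≤ v.val) ∨ (v.val < n ∧ n ≤ u.val))
    (r : Fin n) (hD : badSet n G = RowStar n r) : Nonempty (G ≃g bipG n 0 1) := by
  have hr := r.isLt
  set e := rowEquiv n r with he
  have hval : ∀ u : Fin (2*n), (e u).val =
      if u.val < n then n + sfun n r.val u.val else u.val - n := rowEquiv_val n r
  refine ⟨⟨e, ?_⟩⟩
  intro u v
  rw [bipG_adj, adj_iff_row hbip hD]
  have h1 := hval u
  have h2 := hval v
  have hu2 := u.isLt
  have hv2 := v.isLt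
  rw [sfun] at h1 h2
  split_ifs at h1 h2 <;> omega

end Bad


section Main
open scoped Classical

variable {n : ℕ}

lemma badSet_card_le (n : ℕ) (G : SimpleGraph (Fin (2*n)))
    (hbip : ∀ u v, G.Adj u v → (u.val < n ∧ n ≤ v.val) ∨ (v.val < n ∧ n ≤ u.val))
    (hρ : Real.sqrt ((n:ℝ)*((n:ℝ)-1)) ≤ specRad G) : (badSet n G).card ≤ n := by
  have h1 := edge_lower n G hbip hρ
  have h2 : (univ.filter fun c : Fin n × Fin n =>
      G.Adj (castX n c.1) (castY n c.2)).card + (badSet n G).card = n * n := by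
    rw [badSet, Finset.card_filter_add_card_filter_not, Finset.card_univ]
    simp
  have h3 : ((badSet n G).card : ℝ) ≤ n := by
    have h4 : ((univ.filter fun c : Fin n × Fin n =>
        G.Adj (castX n c.1) (castY n c.2)).card : ℝ) + ((badSet n G).card : ℝ)
        = (n:ℝ) * n := by exact_mod_cast congrArg (Nat.cast : ℕ → ℝ) h2
    nlinarith
  exact_mod_cast h3

lemma fin2_eq_of_ne {a b c : Fin 2} (hab : a ≠ b) (hcb : c ≠ b) : c = a := by
  have h1 : a.val ≠ b.val := fun h => hab (Fin.ext h)
  have h2 : c.val ≠ b.val := fun h => hcb (Fin.ext h)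
  have := a.isLt; have := b.isLt; have := c.isLt
  exact Fin.ext (by omega)

lemma hone_of_n2 (G : SimpleGraph (Fin (2*2)))
    (hbip : ∀ u v, G.Adj u v → (u.val < 2 ∧ 2 ≤ v.val) ∨ (v.val < 2 ∧ 2 ≤ u.val))
    (hcard : (badSet 2 G).card ≤ 2) {c1 c2 : Fin 2 × Fin 2} (h1 : c1 ∈ badSet 2 G)
    (h2 : c2 ∈ badSet 2 G) (hr : c1.1 ≠ c2.1) (hc : c1.2 ≠ c2.2) :
    ∀ u, ∃ z, G.Adj u z ∧ ∀ z', G.Adj u z' → z' = z := by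
  have hne : c1 ≠ c2 := fun h => hr (by rw [h])
  have hD2 : badSet 2 G = {c1, c2} := by
    refine (Finset.eq_of_subset_of_card_le ?_ ?_).symm
    · intro x hx
      rcases Finset.mem_insert.mp hx with rfl | hx
      · exact h1
      · rw [Finset.mem_singleton.mp hx]; exact h2
    · rw [Finset.card_pair hne]; exact hcard
  have hmem : ∀ x : Fin 2 × Fin 2, x ∈ badSet 2 G ↔ x = c1 ∨ x = c2 := by
    intro x; rw [hD2]; simp
  intro u
  by_cases hu : u.val < 2
  · set k : Fin 2 := ⟨u.val, hu⟩ with hk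
    have hueq : u = castX 2 k := Fin.ext rfl
    set m : Fin 2 := if k = c1.1 then c2.2 else c1.2 with hm
    have hgood : (k, m) ∉ badSet 2 G := by
      rw [hmem]
      rintro (h | h)
      · have hh1 : k = c1.1 := congrArg Prod.fst h
        have hh2 : m = c1.2 := congrArg Prod.snd h
        rw [hm, if_pos hh1] at hh2
        exact hc hh2.symm
      · have hh1 : k = c2.1 := congrArg Prod.fst h
        have hh2 : m = c2.2 := congrArg Prod.snd h
        by_cases hk1 : k = c1.1
        · exact hr (hk1.symm.trans hh1)
        · rw [hm, if_neg hk1] at hh2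
          exact hc hh2
    refine ⟨castY 2 m, ?_, ?_⟩
    · rw [hueq]; exact not_mem_badSet_iff.mp hgood
    · intro z' hz'
      have hz2 : 2 ≤ z'.val := by
        rcases hbip u z' hz' with ⟨_, h⟩ | ⟨h, _⟩
        · exact h
        · omega
      have hzlt := z'.isLt
      set l' : Fin 2 := ⟨z'.val - 2, by omega⟩ with hl'
      have hzeq : z' = castY 2 l' := Fin.ext (by simp [castY, hl']; omega)
      have hadj' : G.Adj (castX 2 k) (castY 2 l') := by rw [← hueq, ← hzeq]; exact hz'
      have hnm : (k, l') ∉ badSet 2 G := (not_mem_badSet_iff (c := (k, l'))).mpr hadj'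
      rw [hmem] at hnm
      push_neg at hnm
      rw [hzeq]
      have : l' = m := by
        by_cases hk1 : k = c1.1
        · have hl1 : l' ≠ c1.2 := fun h => hnm.1 (Prod.ext hk1 h)
          rw [hm, if_pos hk1]
          exact fin2_eq_of_ne hc.symm hl1
        · have hk2 : k = c2.1 := fin2_eq_of_ne hr.symm hk1
          have hl2 : l' ≠ c2.2 := fun h => hnm.2 (Prod.ext hk2 h)
          rw [hm, if_neg hk1]
          exact fin2_eq_of_ne hc hl2
      rw [this]
  · push_neg at hu
    have hult := u.isLt
    set l : Fin 2 := ⟨u.val - 2, by omega⟩ with hl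
    have hueq : u = castY 2 l := Fin.ext (by simp [castY, hl]; omega)
    set m : Fin 2 := if l = c1.2 then c2.1 else c1.1 with hm
    have hgood : (m, l) ∉ badSet 2 G := by
      rw [hmem]
      rintro (h | h)
      · have hh1 : m = c1.1 := congrArg Prod.fst h
        have hh2 : l = c1.2 := congrArg Prod.snd h
        rw [hm, if_pos hh2] at hh1
        exact hr hh1.symm
      · have hh1 : m = c2.1 := congrArg Prod.fst h
        have hh2 : l = c2.2 := congrArg Prod.snd h
        by_cases hl1 : l = c1.2
        · exact hc (hl1.symm.trans hh2)
        · rw [hm, if_neg hl1] at hh1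
          exact hr hh1
    refine ⟨castX 2 m, ?_, ?_⟩
    · rw [hueq]; exact (not_mem_badSet_iff.mp hgood).symm
    · intro z' hz'
      have hz2 : z'.val < 2 := by
        rcases hbip u z' hz' with ⟨h, _⟩ | ⟨h, _⟩
        · omega
        · exact h
      set k' : Fin 2 := ⟨z'.val, hz2⟩ with hk'
      have hzeq : z' = castX 2 k' := Fin.ext rfl
      have hadj' : G.Adj (castX 2 k') (castY 2 l) := by rw [← hueq, ← hzeq]; exact hz'.symm
      have hnm : (k', l) ∉ badSet 2 G := (not_mem_badSet_iff (c := (k', l))).mpr hadj'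
      rw [hmem] at hnm
      push_neg at hnm
      rw [hzeq]
      have : k' = m := by
        by_cases hl1 : l = c1.2
        · have hk1 : k' ≠ c1.1 := fun h => hnm.1 (Prod.ext h hl1)
          rw [hm, if_pos hl1]
          exact fin2_eq_of_ne hr.symm hk1
        · have hl2 : l = c2.2 := fin2_eq_of_ne hc.symm hl1
          have hk2 : k' ≠ c2.1 := fun h => hnm.2 (Prod.ext h hl2)
          rw [hm, if_neg hl1]
          exact fin2_eq_of_ne hr hk2
      rw [this]

/-- Shi–Li–Chen: spectral condition for a rainbow perfect matching
in a family of balanced bipartite graphs. -/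
theorem stmt15 (n : ℕ) (𝒢 : Fin n → SimpleGraph (Fin (2*n)))
    (hbip : ∀ i u v, (𝒢 i).Adj u v → (u.val < n ∧ n ≤ v.val) ∨ (v.val < n ∧ n ≤ u.val))
    (hρ : ∀ i, Real.sqrt ((n:ℝ)*((n:ℝ)-1)) ≤ specRad (𝒢 i)) :
    (∃ H, IsRainbowFactor 𝒢 1 H) ∨
      ((∀ i j, 𝒢 i = 𝒢 j) ∧ ∀ i, Nonempty (𝒢 i ≃g bipG n 0 1)) := by
  rcases Nat.eq_zero_or_pos n with rfl | hn
  · exact Or.inl (rainbow_of_perm 𝒢 1 1 (fun k => k.elim0))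
  set D : Fin n → Finset (Fin n × Fin n) := fun i => badSet n (𝒢 i) with hD
  have hDle : ∀ i, (D i).card ≤ n := fun i => badSet_card_le n (𝒢 i) (hbip i) (hρ i)
  have hgood_rainbow : ∀ (σ τ : Perm (Fin n)), (∀ k, (k, σ k) ∉ D (τ k)) →
      ∃ H, IsRainbowFactor 𝒢 1 H := by
    intro σ τ hgood
    exact rainbow_of_perm 𝒢 σ τ (fun k => not_mem_badSet_iff.mp (hgood k))
  by_cases hlt : ∑ i, (D i).card < n^2
  · obtain ⟨σ, τ, hgood⟩ := exists_good_of_lt hn D hlt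
    exact Or.inl (hgood_rainbow σ τ hgood)
  push_neg at hlt
  have hsum_le : ∑ i, (D i).card ≤ n^2 := by
    calc ∑ i, (D i).card ≤ ∑ _i : Fin n, n := Finset.sum_le_sum fun i _ => hDle i
      _ = n^2 := by simp [sq]
  have hsum_eq : ∑ i, (D i).card = n^2 := le_antisymm hsum_le hlt
  have hDeq : ∀ i, (D i).card = n := by
    intro i
    by_contra hne
    have hi : (D i).card < n := lt_of_le_of_ne (hDle i) hne
    have h5 : ∑ j, (D j).card < ∑ _j : Fin n, n := by
      apply Finset.sum_lt_sum (fun j _ => hDle j) ⟨i, Finset.mem_univ i, hi⟩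
    have h6 : (∑ _j : Fin n, n) = n * n := by simp [Finset.sum_const, Finset.card_univ]
    have h7 : n^2 = n * n := pow_two n
    linarith
  -- case: two disjoint bad cells with different colors ⇒ rainbow
  by_cases hdisj : ∃ i j : Fin n, ∃ a ∈ D i, ∃ b ∈ D j,
      i ≠ j ∧ a.1 ≠ b.1 ∧ a.2 ≠ b.2
  · obtain ⟨i, j, a, ha, b, hb, hij, hab1, hab2⟩ := hdisj
    obtain ⟨σ, τ, hgood⟩ := exists_good_of_two hn D hsum_le hij hab1 hab2
      (by rwa [← Prod.mk.eta (p := a)] at ha) (by rwa [← Prod.mk.eta (p := b)] at hb)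
    exact Or.inl (hgood_rainbow σ τ hgood)
  push_neg at hdisj
  have hcross : ∀ i j : Fin n, i ≠ j → ∀ a ∈ D i, ∀ b ∈ D j, a.1 = b.1 ∨ a.2 = b.2 := by
    intro i j hij a ha b hb
    by_contra hcon
    push_neg at hcon
    exact hcon.2 (hdisj i j a ha b hb hij hcon.1)
  -- every D i is a full row star or column star
  have hstar : ∀ i, (∃ r, D i = RowStar n r) ∨ (∃ c, D i = ColStar n c) := by
    intro i
    have hpos : 0 < (D i).card := by rw [hDeq i]; exact hn
    obtain ⟨a₀, ha₀⟩ := Finset.card_pos.mp hpos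
    rcases Nat.lt_or_ge n 2 with hn1 | hn2
    · -- n = 1 : D i = ColStar with the unique column
      right
      refine ⟨a₀.2, ?_⟩
      apply Finset.eq_of_subset_of_card_le
      · intro x hx
        rw [mem_colStar]
        have h1 := x.2.isLt
        have h2 := a₀.2.isLt
        exact Fin.ext (by omega)
      · rw [colStar_card, hDeq i]
    -- n ≥ 2: at least two colors
    obtain ⟨j, hjne⟩ := exists_ne_fin (n := n)
      (by exact_mod_cast hn2) i
    have hrowcol : (∀ b ∈ D i, ∀ b' ∈ D i, b.1 = b'.1) ∨
        (∀ b ∈ D i, ∀ b' ∈ D i, b.2 = b'.2) := by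
      rcases Nat.lt_or_ge n 3 with hn2' | hn3
      · -- n = 2 : if D i is not a star we get a spectral contradiction
        have hn2e : n = 2 := by omega
        by_contra hcon
        push_neg at hcon
        obtain ⟨⟨b1, hb1, b2, hb2, hrow⟩, b3, hb3, b4, hb4, hcol⟩ := hcon
        -- extract two cells with distinct rows and distinct cols
        have hcells : ∃ d1 ∈ D i, ∃ d2 ∈ D i, d1.1 ≠ d2.1 ∧ d1.2 ≠ d2.2 := by
          by_cases h12 : b1.2 = b2.2
          · by_cases h3 : b3.2 = b1.2
            · -- b4.2 ≠ b1.2; row of b4 differs from b1 or b2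
              have hb42 : b4.2 ≠ b1.2 := fun h => hcol (h3.trans h.symm)
              by_cases hb41 : b4.1 = b1.1
              · refine ⟨b2, hb2, b4, hb4, ?_, ?_⟩
                · intro h
                  exact hrow (h.trans hb41).symm
                · intro h
                  exact hb42 (h.symm.trans h12.symm)
              · exact ⟨b1, hb1, b4, hb4, fun h => hb41 h.symm, fun h => hb42 h.symm⟩
            · by_cases hb31 : b3.1 = b1.1
              · refine ⟨b2, hb2, b3, hb3, ?_, ?_⟩
                · intro h; exact hrow (h.trans hb31).symm
                · intro h; exact h3 (h12.trans h).symm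
              · exact ⟨b1, hb1, b3, hb3, fun h => hb31 h.symm, fun h => h3 h.symm⟩
          · exact ⟨b1, hb1, b2, hb2, hrow, h12⟩
        obtain ⟨d1, hd1, d2, hd2, hdr, hdc⟩ := hcells
        exfalso
        subst hn2e
        have hone := hone_of_n2 (𝒢 i) (hbip i) (hDle i) hd1 hd2 hdr hdc
        have hle1 := specRad_le_one (𝒢 i) hone
        have h2 := hρ i
        have hsq : Real.sqrt (((2:ℕ):ℝ)*(((2:ℕ):ℝ)-1)) = Real.sqrt 2 := by norm_num
        rw [hsq] at h2
        have : (1:ℝ) < Real.sqrt 2 := by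
          rw [show (1:ℝ) = Real.sqrt 1 by simp]
          exact Real.sqrt_lt_sqrt (by norm_num) (by norm_num)
        linarith
      · -- n ≥ 3: use the cross-intersecting lemma
        have hcard3 : 3 ≤ (D j).card := by rw [hDeq j]; exact hn3
        exact crossint_star (fun a ha b hb => hcross j i hjne a ha b hb) hcard3
    rcases hrowcol with hrow | hcol
    · left
      refine ⟨a₀.1, ?_⟩
      apply Finset.eq_of_subset_of_card_le
      · intro x hx
        rw [mem_rowStar]
        exact hrow x hx a₀ ha₀
      · rw [rowStar_card, hDeq i]
    · right
      refine ⟨a₀.2, ?_⟩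
      apply Finset.eq_of_subset_of_card_le
      · intro x hx
        rw [mem_colStar]
        exact hcol x hx a₀ ha₀
      · rw [colStar_card, hDeq i]
  -- all stars are equal
  right
  rcases Nat.lt_or_ge n 2 with hn1 | hn2
  · -- n = 1: all are ColStar at the unique column
    have hn1e : n = 1 := by omega
    subst hn1e
    have hallc : ∀ i, D i = ColStar 1 ⟨0, by norm_num⟩ := by
      intro i
      rcases hstar i with ⟨r, hr⟩ | ⟨c, hc⟩
      · rw [hr]
        ext x
        rw [mem_rowStar, mem_colStar]
        have := x.1.isLt; have := x.2.isLt; have := r.isLt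
        constructor <;> intro <;> exact Fin.ext (by omega)
      · rw [hc]
        congr 1
        have := c.isLt
        exact Fin.ext (by omega)
    constructor
    · intro i j
      exact graph_eq_of_badSet_eq (hbip i) (hbip j) ((hallc i).trans (hallc j).symm)
    · intro i
      exact iso_col (by norm_num) (𝒢 i) (hbip i) _ (hallc i)
  -- n ≥ 2
  have hsame : (∃ r, ∀ i, D i = RowStar n r) ∨ (∃ c, ∀ i, D i = ColStar n c) := by
    set i₀ : Fin n := ⟨0, hn⟩ with hi₀
    rcases hstar i₀ with ⟨r, hr⟩ | ⟨c, hc⟩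
    · left
      refine ⟨r, fun i => ?_⟩
      by_cases hi : i = i₀
      · rw [hi, hr]
      rcases hstar i with ⟨r', hr'⟩ | ⟨c', hc'⟩
      · -- same row required
        have hrr : r' = r := by
          obtain ⟨c2, hc2⟩ := exists_ne_fin hn2 (⟨0, hn⟩ : Fin n)
          have h1 : (r, (⟨0, hn⟩ : Fin n)) ∈ D i₀ := by rw [hr, mem_rowStar]
          have h2 : (r', c2) ∈ D i := by rw [hr', mem_rowStar]
          rcases hcross i₀ i (fun h => hi h.symm) _ h1 _ h2 with h | h
          · exact h.symm
          · exact absurd h.symm hc2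
        rw [hr', hrr]
      · -- mixed row/col: contradiction
        exfalso
        obtain ⟨c2, hc2⟩ := exists_ne_fin hn2 c'
        obtain ⟨r2, hr2⟩ := exists_ne_fin hn2 r
        have h1 : (r, c2) ∈ D i₀ := by rw [hr, mem_rowStar]
        have h2 : (r2, c') ∈ D i := by rw [hc', mem_colStar]
        rcases hcross i₀ i (fun h => hi h.symm) _ h1 _ h2 with h | h
        · exact hr2 h.symm
        · exact hc2 h
    · right
      refine ⟨c, fun i => ?_⟩
      by_cases hi : i = i₀
      · rw [hi, hc]
      rcases hstar i with ⟨r', hr'⟩ | ⟨c', hc'⟩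
      · exfalso
        obtain ⟨c2, hc2⟩ := exists_ne_fin hn2 c
        obtain ⟨r2, hr2⟩ := exists_ne_fin hn2 r'
        have h1 : (r2, c) ∈ D i₀ := by rw [hc, mem_colStar]
        have h2 : (r', c2) ∈ D i := by rw [hr', mem_rowStar]
        rcases hcross i₀ i (fun h => hi h.symm) _ h1 _ h2 with h | h
        · exact hr2 h
        · exact hc2 h.symm
      · have hcc : c' = c := by
          obtain ⟨r2, hr2⟩ := exists_ne_fin hn2 (⟨0, hn⟩ : Fin n)
          have h1 : ((⟨0, hn⟩ : Fin n), c) ∈ D i₀ := by rw [hc, mem_colStar]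
          have h2 : (r2, c') ∈ D i := by rw [hc', mem_colStar]
          rcases hcross i₀ i (fun h => hi h.symm) _ h1 _ h2 with h | h
          · exact absurd h hr2.symm
          · exact h.symm
        rw [hc', hcc]
  rcases hsame with ⟨r, hall⟩ | ⟨c, hall⟩
  · constructor
    · intro i j
      exact graph_eq_of_badSet_eq (hbip i) (hbip j) ((hall i).trans (hall j).symm)
    · intro i
      exact iso_row (by omega) (𝒢 i) (hbip i) r (hall i)
  · constructor
    · intro i j
      exact graph_eq_of_badSet_eq (hbip i) (hbip j) ((hall i).trans (hall j).symm)
    · intro i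
      exact iso_col (by omega) (𝒢 i) (hbip i) c (hall i)

end Main
end
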